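/- arXiv:1508.05534 — 4 statements merged into one kernel-verified Lean document; each statement's English description precedes it below -/
import Mathlib

section
/- Let p be a prime and d = (d_1, d_2, …) a sequence of positive integers. Then for every integer n ≥ 1 and all integers m ≥ 0 and r ≥ 1, N_r^d(m,n) ≤ n · 4^n · e^{2πn/√3}. -/
namespace Stmt13Aux

/-! ### Binary encoding of words -/

/-- Encode a list of booleans as a natural number (with a leading 1 marker). -/
def natEnc : List Bool → ℕ
  | [] => 1
  | x :: t => 2 * natEnc t + (if x then 1 else 0)

lemma natEnc_pos (l : List Bool) : 1 ≤ natEnc l := by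
  cases l with
  | nil => simp [natEnc]
  | cons x t => have := natEnc_pos t; simp only [natEnc]; omega

lemma natEnc_lt (l : List Bool) : natEnc l < 2 ^ (l.length + 1) := by
  induction l with
  | nil => simp [natEnc]
  | cons x t ih =>
      simp only [natEnc, List.length_cons, pow_succ]
      split <;> omega

lemma natEnc_inj : ∀ l l' : List Bool, natEnc l = natEnc l' → l = l' := by
  intro l
  induction l with
  | nil =>
      intro l' h
      cases l' with
      | nil => rfl
      | cons y t =>
          have := natEnc_pos t
          simp only [natEnc] at h
          split at h <;> omega
  | cons x t ih =>
      intro l' h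
      cases l' with
      | nil =>
          have := natEnc_pos t
          simp only [natEnc] at h
          split at h <;> omega
      | cons y t' =>
          simp only [natEnc] at h
          have hx : x = y ∧ natEnc t = natEnc t' := by
            rcases x <;> rcases y <;> simp_all <;> omega
          rw [hx.1, ih t' hx.2]

/-! ### Unary encodings -/

/-- `g` ones followed by a zero. -/
def unary (g : ℕ) : List Bool := List.replicate g true ++ [false]

@[simp] lemma unary_length (g : ℕ) : (unary g).length = g + 1 := by
  simp [unary]

/-- Key prefix-code property of unary blocks. -/
lemma unary_append_inj : ∀ g g' : ℕ, ∀ x x' : List Bool,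
    unary g ++ x = unary g' ++ x' → g = g' ∧ x = x' := by
  intro g
  induction g with
  | zero =>
      intro g' x x' h
      cases g' with
      | zero => simpa [unary] using h
      | succ k => simp [unary, List.replicate_succ] at h
  | succ k ih =>
      intro g' x x' h
      cases g' with
      | zero => simp [unary, List.replicate_succ] at h
      | succ k' =>
          simp only [unary, List.replicate_succ, List.cons_append, List.cons.injEq] at h
          have := ih k' x x' (by simpa [unary] using h.2)
          exact ⟨by omega, this.2⟩

/-- Encode a list of naturals as a sequence of unary blocks. -/
def unaryEnc : List ℕ → List Bool
  | [] => []
  | g :: t => unary g ++ unaryEnc t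

lemma unaryEnc_length (l : List ℕ) : (unaryEnc l).length = l.sum + l.length := by
  induction l with
  | nil => simp [unaryEnc]
  | cons g t ih => simp [unaryEnc, ih]; omega

lemma unaryEnc_append_inj : ∀ l l' : List ℕ, ∀ x x' : List Bool,
    l.length = l'.length → unaryEnc l ++ x = unaryEnc l' ++ x' →
    l = l' ∧ x = x' := by
  intro l
  induction l with
  | nil =>
      intro l' x x' hl h
      cases l' with
      | nil => simpa [unaryEnc] using h
      | cons g t => simp at hl
  | cons g t ih =>
      intro l' x x' hl h
      cases l' with
      | nil => simp at hl
      | cons g' t' =>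
          simp only [unaryEnc, List.append_assoc] at h
          obtain ⟨h1, h2⟩ := unary_append_inj g g' _ _ h
          obtain ⟨h3, h4⟩ := ih t' x x' (by simpa using hl) h2
          exact ⟨by rw [h1, h3], h4⟩

/-- Encode a list of lists of naturals; each inner list is encoded in unary
blocks and terminated by an extra `false`. -/
def wEnc : List (List ℕ) → List Bool
  | [] => []
  | vs :: t => unaryEnc vs ++ [false] ++ wEnc t

lemma wEnc_length (l : List (List ℕ)) :
    (wEnc l).length = (l.map (fun vs => vs.sum + vs.length + 1)).sum := by
  induction l with
  | nil => simp [wEnc]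
  | cons vs t ih => simp [wEnc, unaryEnc_length, ih]; omega

/-- Inner-list injectivity: provided all values are nonzero, `unaryEnc vs ++ [false]`
is a prefix code. -/
lemma vsEnc_append_inj : ∀ vs vs' : List ℕ, ∀ x x' : List Bool,
    (∀ v ∈ vs, v ≠ 0) → (∀ v ∈ vs', v ≠ 0) →
    unaryEnc vs ++ [false] ++ x = unaryEnc vs' ++ [false] ++ x' →
    vs = vs' ∧ x = x' := by
  intro vs
  induction vs with
  | nil =>
      intro vs' x x' hv hv' h
      cases vs' with
      | nil => simpa [unaryEnc] using h
      | cons v t =>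
          exfalso
          have hvne : v ≠ 0 := hv' v (by simp)
          cases v with
          | zero => exact hvne rfl
          | succ w =>
              simp [unaryEnc, unary, List.replicate_succ] at h
  | cons v t ih =>
      intro vs' x x' hv hv' h
      cases vs' with
      | nil =>
          exfalso
          have hvne : v ≠ 0 := hv v (by simp)
          cases v with
          | zero => exact hvne rfl
          | succ w =>
              simp [unaryEnc, unary, List.replicate_succ] at h
      | cons v' t' =>
          simp only [unaryEnc, List.append_assoc] at h
          obtain ⟨h1, h2⟩ := unary_append_inj v v' _ _ h
          obtain ⟨h3, h4⟩ := ih t' x x' (fun u hu => hv u (by simp [hu]))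
            (fun u hu => hv' u (by simp [hu])) (by simpa [List.append_assoc] using h2)
          exact ⟨by rw [h1, h3], h4⟩

lemma wEnc_append_inj : ∀ l l' : List (List ℕ), ∀ x x' : List Bool,
    l.length = l'.length →
    (∀ vs ∈ l, ∀ v ∈ vs, v ≠ 0) → (∀ vs ∈ l', ∀ v ∈ vs, v ≠ 0) →
    wEnc l ++ x = wEnc l' ++ x' → l = l' ∧ x = x' := by
  intro l
  induction l with
  | nil =>
      intro l' x x' hl hv hv' h
      cases l' with
      | nil => simpa [wEnc] using h
      | cons vs t => simp at hl
  | cons vs t ih =>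
      intro l' x x' hl hv hv' h
      cases l' with
      | nil => simp at hl
      | cons vs' t' =>
          simp only [wEnc, List.append_assoc] at h
          obtain ⟨h1, h2⟩ := vsEnc_append_inj vs vs' _ _
            (hv vs (by simp)) (hv' vs' (by simp)) (by simpa [List.append_assoc] using h)
          obtain ⟨h3, h4⟩ := ih t' x x' (by simpa using hl)
            (fun u hu => hv u (by simp [hu])) (fun u hu => hv' u (by simp [hu])) h2
          exact ⟨by rw [h1, h3], h4⟩





/-! ### Difference encoding of strictly decreasing lists -/

def dEnc : List ℕ → List ℕ
  | [] => []
  | [x] => [x]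
  | x :: y :: t => (x - y - 1) :: dEnc (y :: t)

@[simp] lemma dEnc_length : ∀ l : List ℕ, (dEnc l).length = l.length
  | [] => rfl
  | [_] => rfl
  | x :: y :: t => by simp [dEnc, dEnc_length (y :: t)]

lemma dEnc_sum : ∀ x : ℕ, ∀ t : List ℕ, (x :: t).Chain' (· > ·) →
    (dEnc (x :: t)).sum ≤ x := by
  intro x t
  induction t generalizing x with
  | nil => intro _; simp [dEnc]
  | cons y t ih =>
      intro hc
      have hxy : x > y := List.isChain_cons_cons.mp hc |>.1
      have := ih y (List.isChain_cons_cons.mp hc).2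
      simp only [dEnc, List.sum_cons]
      omega

lemma dEnc_inj : ∀ l l' : List ℕ, l.Chain' (· > ·) → l'.Chain' (· > ·) →
    dEnc l = dEnc l' → l = l' := by
  intro l
  induction l with
  | nil =>
      intro l' _ _ h
      cases l' with
      | nil => rfl
      | cons x t => exfalso; have := congrArg List.length h; simp at this
  | cons x t ih =>
      intro l' hc hc' h
      cases l' with
      | nil => exfalso; have := congrArg List.length h; simp at this
      | cons x' t' =>
          cases t with
          | nil =>
              cases t' with
              | nil => simpa [dEnc] using h
              | cons y' u' =>
                  exfalso; have := congrArg List.length h; simp at this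
          | cons y u =>
              cases t' with
              | nil => exfalso; have := congrArg List.length h; simp at this
              | cons y' u' =>
                  simp only [dEnc, List.cons.injEq] at h
                  have h2 := ih (y' :: u') (List.isChain_cons_cons.mp hc).2
                    (List.isChain_cons_cons.mp hc').2 h.2
                  have hy : y = y' := by
                    have := congrArg (fun l => l.headD 0) h2; simpa using this
                  have hxy : x > y := (List.isChain_cons_cons.mp hc).1
                  have hxy' : x' > y' := (List.isChain_cons_cons.mp hc').1
                  have hx : x = x' := by omega
                  rw [hx, h2]

/-! ### Generic list helpers -/

lemma map_injOn_eq {α β : Type*} (f : α → β) :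
    ∀ l l' : List α, (∀ a ∈ l, ∀ b ∈ l', f a = f b → a = b) →
      l.map f = l'.map f → l = l' := by
  intro l
  induction l with
  | nil => intro l' _ h; cases l' <;> simp_all
  | cons a t ih =>
      intro l' hinj h
      cases l' with
      | nil => simp at h
      | cons b t' =>
          simp only [List.map_cons, List.cons.injEq] at h
          have ha : a = b := hinj a (by simp) b (by simp) h.1
          have := ih t' (fun u hu v hv => hinj u (by simp [hu]) v (by simp [hv])) h.2
          rw [ha, this]

lemma map_eq_map_mem {α β : Type*} {f g : α → β} :
    ∀ l : List α, l.map f = l.map g → ∀ a ∈ l, f a = g a := by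
  intro l
  induction l with
  | nil => simp
  | cons x t ih =>
      intro h a ha
      simp only [List.map_cons, List.cons.injEq] at h
      rcases List.mem_cons.mp ha with rfl | ha
      · exact h.1
      · exact ih h.2 a ha

lemma sum_list_range_map (f : ℕ → ℕ) (q : ℕ) :
    ((List.range q).map f).sum = ∑ i ∈ Finset.range q, f i := by
  induction q with
  | zero => simp
  | succ k ih => rw [List.range_succ, Finset.sum_range_succ]; simp [ih]

lemma pairwise_map_of_mem {β : Type*} {ρ : ℕ → β} {D : ℕ → Prop}
    {R : β → β → Prop} :
    ∀ l : List ℕ, (∀ a ∈ l, D a) → (∀ a b, D a → D b → a > b → R (ρ a) (ρ b)) →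
      l.Pairwise (fun a b : ℕ => a > b) → (l.map ρ).Pairwise R
  | [], _, _, _ => by simp
  | a :: t, hD, hR, hp => by
      simp only [List.map_cons, List.pairwise_cons]
      constructor
      · intro b hb
        obtain ⟨u, hu, rfl⟩ := List.mem_map.mp hb
        exact hR a u (hD a (by simp)) (hD u (by simp [hu]))
          ((List.pairwise_cons.mp hp).1 u hu)
      · exact pairwise_map_of_mem t (fun u hu => hD u (by simp [hu])) hR
          (List.pairwise_cons.mp hp).2







/-! ### Partial sums, carries and digits -/

/-- Partial sum `∑_{j<i} c j * p^j`. -/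
def AA (p : ℕ) (c : ℕ → ℕ) (i : ℕ) : ℕ := ∑ j ∈ Finset.range i, c j * p ^ j

/-- The carry sequence of the representation `c`. -/
def kk (p : ℕ) (c : ℕ → ℕ) (i : ℕ) : ℕ := AA p c i / p ^ i

/-- Base-`p` digits of `M`. -/
def dig (p M i : ℕ) : ℕ := M / p ^ i % p

/-- Rank of position `h`: sum of the digits of `M` below `h`. -/
def rk (p M h : ℕ) : ℕ := ∑ j ∈ Finset.range h, dig p M j

lemma AA_stable {p : ℕ} {c : ℕ → ℕ} {r : ℕ} (hc : ∀ i, r ≤ i → c i = 0)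
    {i : ℕ} (hi : r ≤ i) : AA p c i = AA p c r := by
  unfold AA
  rw [← Finset.sum_subset (Finset.range_subset_range.mpr hi)]
  intro j _ hj
  rw [hc j (by simpa using hj), zero_mul]

lemma AA_le {p : ℕ} {c : ℕ → ℕ} {r : ℕ} (hc : ∀ i, r ≤ i → c i = 0) (i : ℕ) :
    AA p c i ≤ AA p c r := by
  rcases le_or_gt r i with h | h
  · exact le_of_eq (AA_stable hc h)
  · exact Finset.sum_le_sum_of_subset (Finset.range_subset_range.mpr h.le)

lemma AA_succ (p : ℕ) (c : ℕ → ℕ) (i : ℕ) :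
    AA p c (i + 1) = AA p c i + c i * p ^ i :=
  Finset.sum_range_succ _ _

lemma AA_add_pow_dvd {p : ℕ} {c : ℕ → ℕ} {i j0 : ℕ} (hij : i ≤ j0) :
    ∃ t, AA p c j0 = AA p c i + p ^ i * t := by
  have hsplit : AA p c j0 = AA p c i + ∑ u ∈ Finset.Ico i j0, c u * p ^ u := by
    unfold AA
    rw [Finset.range_eq_Ico, Finset.range_eq_Ico]
    exact (Finset.sum_Ico_consecutive (fun u => c u * p ^ u) (Nat.zero_le i) hij).symm
  have hdvd : p ^ i ∣ ∑ u ∈ Finset.Ico i j0, c u * p ^ u := by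
    apply Finset.dvd_sum
    intro u hu
    exact Dvd.dvd.mul_left (pow_dvd_pow p (Finset.mem_Ico.mp hu).1) _
  obtain ⟨t, ht⟩ := hdvd
  exact ⟨t, by rw [hsplit, ht]⟩

/-- The partial sums agree with `M := AA p c r` modulo `p^i`. -/
lemma AA_mod {p : ℕ} {c : ℕ → ℕ} {r : ℕ} (hc : ∀ i, r ≤ i → c i = 0) (i : ℕ) :
    AA p c i % p ^ i = (AA p c r) % p ^ i := by
  rcases le_or_gt i r with h | h
  · obtain ⟨t, ht⟩ := AA_add_pow_dvd (c := c) (p := p) h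
    rw [ht, Nat.add_mul_mod_self_left]
  · rw [AA_stable hc h.le]

/-- Decomposition of the partial sum into carry and truncation of `M`. -/
lemma AA_eq {p : ℕ} {c : ℕ → ℕ} {r : ℕ} (hc : ∀ i, r ≤ i → c i = 0) (i : ℕ) :
    AA p c i = p ^ i * kk p c i + (AA p c r) % p ^ i := by
  rw [← AA_mod hc i, kk]
  exact (Nat.div_add_mod _ _).symm

lemma kk_zero (p : ℕ) (c : ℕ → ℕ) : kk p c 0 = 0 := by simp [kk, AA]

lemma kk_eq_zero_of_big {p : ℕ} {c : ℕ → ℕ} {r : ℕ} (hc : ∀ i, r ≤ i → c i = 0)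
    {i : ℕ} (hi : AA p c r < p ^ i) : kk p c i = 0 :=
  Nat.div_eq_of_lt (lt_of_le_of_lt (AA_le hc i) hi)

lemma dig_eq_zero_of_big {p M i : ℕ} (hi : M < p ^ i) : dig p M i = 0 := by
  rw [dig, Nat.div_eq_of_lt hi, Nat.zero_mod]

/-- Fundamental digit/carry recursion. -/
lemma carry_rec {p : ℕ} (hp : 2 ≤ p) {c : ℕ → ℕ} {r : ℕ} (hc : ∀ i, r ≤ i → c i = 0)
    (i : ℕ) :
    c i + kk p c i = dig p (AA p c r) i + p * kk p c (i + 1) := by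
  have hppos : 0 < p ^ i := pow_pos (by omega) i
  set M := AA p c r with hM
  have e1 : AA p c i = p ^ i * kk p c i + M % p ^ i := AA_eq hc i
  have e2 : AA p c (i + 1) = p ^ (i + 1) * kk p c (i + 1) + M % p ^ (i + 1) :=
    AA_eq hc (i + 1)
  have e3 : AA p c (i + 1) = AA p c i + c i * p ^ i := AA_succ p c i
  have e4 : M % p ^ (i + 1) = M % p ^ i + p ^ i * dig p M i := by
    rw [pow_succ, Nat.mod_mul, dig]
  have key : p ^ i * (p * kk p c (i + 1) + dig p M i) + M % p ^ i
      = p ^ i * (kk p c i + c i) + M % p ^ i := by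
    calc p ^ i * (p * kk p c (i + 1) + dig p M i) + M % p ^ i
        = p ^ (i + 1) * kk p c (i + 1) + (M % p ^ i + p ^ i * dig p M i) := by
          rw [pow_succ]; ring
      _ = p ^ (i + 1) * kk p c (i + 1) + M % p ^ (i + 1) := by rw [e4]
      _ = AA p c (i + 1) := e2.symm
      _ = AA p c i + c i * p ^ i := e3
      _ = (p ^ i * kk p c i + M % p ^ i) + c i * p ^ i := by rw [e1]
      _ = p ^ i * (kk p c i + c i) + M % p ^ i := by ring
  have key2 : p * kk p c (i + 1) + dig p M i = kk p c i + c i :=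
    Nat.eq_of_mul_eq_mul_left hppos (Nat.add_right_cancel key)
  generalize p * kk p c (i + 1) = P at key2 ⊢
  omega

/-- Telescoped identity: `∑ c + ∑ k = ∑ digits + p * ∑ k`. -/
lemma telescope {p : ℕ} (hp : 2 ≤ p) {c : ℕ → ℕ} {r : ℕ} (hc : ∀ i, r ≤ i → c i = 0)
    {N : ℕ} (hkN : kk p c N = 0) :
    ∑ i ∈ Finset.range N, c i + ∑ i ∈ Finset.range N, kk p c i
      = ∑ i ∈ Finset.range N, dig p (AA p c r) i + p * ∑ i ∈ Finset.range N, kk p c i := by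
  have h1 : ∑ i ∈ Finset.range N, (c i + kk p c i)
      = ∑ i ∈ Finset.range N, (dig p (AA p c r) i + p * kk p c (i + 1)) :=
    Finset.sum_congr rfl (fun i _ => carry_rec hp hc i)
  have h2 : ∑ i ∈ Finset.range N, kk p c (i + 1) = ∑ i ∈ Finset.range N, kk p c i := by
    have ha : ∑ i ∈ Finset.range (N + 1), kk p c i
        = ∑ i ∈ Finset.range N, kk p c (i + 1) + kk p c 0 := Finset.sum_range_succ' _ _
    have hb : ∑ i ∈ Finset.range (N + 1), kk p c i
        = ∑ i ∈ Finset.range N, kk p c i + kk p c N := Finset.sum_range_succ _ _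
    rw [kk_zero] at ha
    omega
  rw [Finset.sum_add_distrib, Finset.sum_add_distrib, ← Finset.mul_sum, h2] at h1
  exact h1

/-- `rk` is strictly monotone on positions with nonzero digit. -/
lemma rk_lt {p M h h' : ℕ} (hhh : h < h') (hdig : dig p M h ≠ 0) :
    rk p M h < rk p M h' := by
  have : rk p M h + dig p M h ≤ rk p M h' := by
    rw [rk, ← Finset.sum_range_succ]
    exact Finset.sum_le_sum_of_subset (Finset.range_subset_range.mpr hhh)
  omega

lemma rk_le {p M h N : ℕ} (hh : h ≤ N) : rk p M h ≤ ∑ j ∈ Finset.range N, dig p M j :=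
  Finset.sum_le_sum_of_subset (Finset.range_subset_range.mpr hh)

/-! ### Runs of the carry sequence -/

open Classical in
/-- Length of the run of nonzero values of `k` extending downward from `h`. -/
noncomputable def lenR (k : ℕ → ℕ) (h : ℕ) : ℕ :=
  if hex : ∃ o, k (h - o) = 0 then Nat.find hex else 0

/-- The values of `k` along the run below `h`, from `h` downward. -/
noncomputable def rdR (k : ℕ → ℕ) (h : ℕ) : List ℕ :=
  (List.range (lenR k h)).map (fun o => k (h - o))

/-- Tops of runs. -/
def Tops (k : ℕ → ℕ) (N : ℕ) : Finset ℕ :=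
  (Finset.range N).filter (fun h => k h ≠ 0 ∧ k (h + 1) = 0)

/-- Tops listed in decreasing order. -/
noncomputable def topL (k : ℕ → ℕ) (N : ℕ) : List ℕ :=
  ((Tops k N).sort (· ≤ ·)).reverse

lemma lenR_exists {k : ℕ → ℕ} (hk0 : k 0 = 0) (h : ℕ) : ∃ o, k (h - o) = 0 :=
  ⟨h, by simpa using hk0⟩

lemma lenR_eq {k : ℕ → ℕ} (hk0 : k 0 = 0) (h : ℕ) :
    lenR k h = Nat.find (lenR_exists hk0 h) := by
  rw [lenR, dif_pos (lenR_exists hk0 h)]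

lemma lenR_min {k : ℕ → ℕ} (hk0 : k 0 = 0) {h o : ℕ} (ho : o < lenR k h) :
    k (h - o) ≠ 0 := by
  rw [lenR_eq hk0] at ho
  exact Nat.find_min (lenR_exists hk0 h) (m := o) ho

lemma lenR_le {k : ℕ → ℕ} (hk0 : k 0 = 0) (h : ℕ) : lenR k h ≤ h := by
  rw [lenR_eq hk0]
  exact Nat.find_min' _ (by simpa using hk0)

lemma lt_lenR {k : ℕ → ℕ} (hk0 : k 0 = 0) {h o : ℕ}
    (ho : ∀ o' ≤ o, k (h - o') ≠ 0) : o < lenR k h := by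
  rw [lenR_eq hk0]
  exact (Nat.lt_find_iff _ _).mpr (fun m hm h0 => ho m hm h0)

@[simp] lemma rdR_length (k : ℕ → ℕ) (h : ℕ) : (rdR k h).length = lenR k h := by
  simp [rdR]

lemma rdR_getElem (k : ℕ → ℕ) {h o : ℕ} (ho : o < lenR k h) :
    (rdR k h)[o]'(by simpa using ho) = k (h - o) := by
  simp [rdR]

lemma rdR_ne_zero {k : ℕ → ℕ} (hk0 : k 0 = 0) {h : ℕ} {v : ℕ} (hv : v ∈ rdR k h) :
    v ≠ 0 := by
  rw [rdR] at hv
  obtain ⟨o, ho, rfl⟩ := List.mem_map.mp hv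
  exact lenR_min hk0 (by simpa using ho)

lemma rdR_sum (k : ℕ → ℕ) (h : ℕ) :
    (rdR k h).sum = ∑ o ∈ Finset.range (lenR k h), k (h - o) := by
  rw [rdR]
  exact sum_list_range_map _ _

lemma mem_Tops {k : ℕ → ℕ} {N h : ℕ} :
    h ∈ Tops k N ↔ h < N ∧ k h ≠ 0 ∧ k (h + 1) = 0 := by
  simp [Tops, and_assoc]

lemma mem_topL {k : ℕ → ℕ} {N h : ℕ} : h ∈ topL k N ↔ h ∈ Tops k N := by
  simp [topL, Finset.mem_sort]

lemma topL_pairwise (k : ℕ → ℕ) (N : ℕ) :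
    (topL k N).Pairwise (fun a b : ℕ => a > b) := by
  rw [topL, List.pairwise_reverse]
  exact (Finset.sortedLT_sort _).pairwise

/-- Every nonzero position of `k` has a run top above it. -/
lemma exists_top {k : ℕ → ℕ} {N : ℕ} (hkN : ∀ i, N ≤ i → k i = 0) {i : ℕ}
    (hi : k i ≠ 0) :
    ∃ h, i ≤ h ∧ (∀ j, i ≤ j → j ≤ h → k j ≠ 0) ∧ k (h + 1) = 0 := by
  have hP : ∃ o, k (i + o + 1) = 0 := ⟨N, hkN _ (by omega)⟩
  refine ⟨i + Nat.find hP, by omega, ?_, ?_⟩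
  · intro j hij hjh
    rcases Nat.eq_or_lt_of_le hij with rfl | hlt
    · exact hi
    · have hfind : j - i - 1 < Nat.find hP := by omega
      have hne := Nat.find_min hP hfind
      have hj : i + (j - i - 1) + 1 = j := by omega
      rw [hj] at hne
      exact hne
  · exact Nat.find_spec hP

lemma top_mem_Tops {k : ℕ → ℕ} {N h : ℕ} (hkN : ∀ i, N ≤ i → k i = 0)
    (h1 : k h ≠ 0) (h2 : k (h + 1) = 0) : h ∈ Tops k N := by
  rw [mem_Tops]
  refine ⟨?_, h1, h2⟩
  by_contra hcon
  exact h1 (hkN h (by omega))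

/-- Key disjointness bound: the sum of any `g` over all run positions is at most
the sum of `g` over all nonzero positions of `k`. -/
lemma run_sum_le {k : ℕ → ℕ} (hk0 : k 0 = 0) (N : ℕ) (g : ℕ → ℕ) :
    ∑ h ∈ Tops k N, ∑ o ∈ Finset.range (lenR k h), g (h - o)
      ≤ ∑ i ∈ (Finset.range N).filter (fun i => k i ≠ 0), g i := by
  classical
  rw [← Finset.sum_sigma (Tops k N) (fun h => Finset.range (lenR k h))
    (fun q => g (q.1 - q.2))]
  have haux : ∀ h o h' o' : ℕ, h ∈ Tops k N → o < lenR k h → h' ∈ Tops k N →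
      o' < lenR k h' → h - o = h' - o' → h < h' → False := by
    intro h o h' o' hT ho hT' ho' heq hlt
    have hT2 := mem_Tops.mp hT
    have hole : lenR k h ≤ h := lenR_le hk0 h
    have hole' : lenR k h' ≤ h' := lenR_le hk0 h'
    have ho'' : h' - h - 1 < lenR k h' := by omega
    have hne := lenR_min hk0 ho''
    have heq2 : h' - (h' - h - 1) = h + 1 := by omega
    rw [heq2] at hne
    exact hne hT2.2.2
  have hinj : ∀ q ∈ (Tops k N).sigma (fun h => Finset.range (lenR k h)),
      ∀ q' ∈ (Tops k N).sigma (fun h => Finset.range (lenR k h)),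
      q.1 - q.2 = q'.1 - q'.2 → q = q' := by
    rintro ⟨h, o⟩ hq ⟨h', o'⟩ hq' heq
    simp only [Finset.mem_sigma, Finset.mem_range] at hq hq'
    simp only at heq
    rcases lt_trichotomy h h' with hlt | hEq | hlt
    · exact absurd (haux h o h' o' hq.1 hq.2 hq'.1 hq'.2 heq hlt) not_false
    · subst hEq
      have h1 : lenR k h ≤ h := lenR_le hk0 h
      have : o = o' := by omega
      subst this
      rfl
    · exact absurd (haux h' o' h o hq'.1 hq'.2 hq.1 hq.2 heq.symm hlt) not_false
  rw [← Finset.sum_image hinj]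
  apply Finset.sum_le_sum_of_subset
  intro y hy
  simp only [Finset.mem_image] at hy
  obtain ⟨q, hq, rfl⟩ := hy
  simp only [Finset.mem_sigma, Finset.mem_range] at hq
  have hT := mem_Tops.mp hq.1
  simp only [Finset.mem_filter, Finset.mem_range]
  exact ⟨by omega, lenR_min hk0 hq.2⟩


end Stmt13Aux

/-- The set of solutions of the extended linear system, where `b_i ∈ {0, d_i}`:
pairs of finitely supported sequences `(a, b)` in which index `i` (for `0 ≤ i < r`)
corresponds to `a_{i+1}`, `b_{i+1}`, and `d : ℕ → ℕ` with `d i` corresponding to `d_{i+1}`. -/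
def SolSetD (p : ℕ) (d : ℕ → ℕ) (r m n : ℕ) : Set ((ℕ → ℕ) × (ℕ → ℕ)) :=
  {ab | (∀ i, r ≤ i → ab.1 i = 0) ∧ (∀ i, r ≤ i → ab.2 i = 0) ∧
        (∀ i, i < r → ab.2 i = 0 ∨ ab.2 i = d i) ∧
        2 * (∑ i ∈ Finset.range r, ab.1 i) + ∑ i ∈ Finset.range r, ab.2 i = n ∧
        ab.2 0 + ∑ i ∈ Finset.range r, (ab.1 i + ab.2 (i + 1)) * p ^ (i + 1) = m}


/-! ### Encoding of solutions -/

namespace Stmt13Aux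

/-- The combined digit sequence of a solution. -/
def cF (r : ℕ) (x : (ℕ → ℕ) × (ℕ → ℕ)) : ℕ → ℕ :=
  fun i => if i < r then x.1 i + x.2 (i + 1) else 0

/-- The number represented by the digit sequence. -/
def MF (p r : ℕ) (x : (ℕ → ℕ) × (ℕ → ℕ)) : ℕ := AA p (cF r x) r

/-- A bound beyond which everything vanishes. -/
def NF (p r : ℕ) (x : (ℕ → ℕ) × (ℕ → ℕ)) : ℕ := r + MF p r x + 1

/-- Carry sequence of a solution. -/
def kF (p r : ℕ) (x : (ℕ → ℕ) × (ℕ → ℕ)) : ℕ → ℕ := kk p (cF r x)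

/-- Gap encoding of the ranks of the run tops. -/
noncomputable def gammaL (p r : ℕ) (x : (ℕ → ℕ) × (ℕ → ℕ)) : List ℕ :=
  dEnc ((topL (kF p r x) (NF p r x)).map (rk p (MF p r x)))

/-- Lists of run values. -/
noncomputable def rdL (p r : ℕ) (x : (ℕ → ℕ) × (ℕ → ℕ)) : List (List ℕ) :=
  (topL (kF p r x) (NF p r x)).map (rdR (kF p r x))

/-- Support of `cF`, listed decreasingly. -/
def ScL (r : ℕ) (x : (ℕ → ℕ) × (ℕ → ℕ)) : List ℕ :=
  (((Finset.range r).filter (fun i => cF r x i ≠ 0)).sort (· ≤ ·)).reverse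

/-- Flags recording whether each `b`-component on the support is zero. -/
def wB (r : ℕ) (x : (ℕ → ℕ) × (ℕ → ℕ)) : List Bool :=
  (ScL r x).map (fun i => decide (x.2 (i + 1) = 0))

/-- The full encoding word of a solution. -/
noncomputable def wAll (p r : ℕ) (x : (ℕ → ℕ) × (ℕ → ℕ)) : List Bool :=
  decide (x.2 0 = 0) ::
    (unary (topL (kF p r x) (NF p r x)).length ++
      (unaryEnc (gammaL p r x) ++ (wEnc (rdL p r x) ++ wB r x)))

section Sol

variable {p : ℕ} {d : ℕ → ℕ} {r m n : ℕ} {x : (ℕ → ℕ) × (ℕ → ℕ)}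

lemma cF_vanish (r : ℕ) (x : (ℕ → ℕ) × (ℕ → ℕ)) : ∀ i, r ≤ i → cF r x i = 0 :=
  fun i hi => if_neg (by omega)

lemma kF_zero (p r : ℕ) (x : (ℕ → ℕ) × (ℕ → ℕ)) : kF p r x 0 = 0 := kk_zero p _

lemma MF_lt (hp : 2 ≤ p) {i : ℕ} (hi : NF p r x ≤ i) : MF p r x < p ^ i := by
  have h1 : MF p r x < 2 ^ (MF p r x + 1) :=
    lt_of_lt_of_le (Nat.lt_two_pow_self) (Nat.pow_le_pow_right (by norm_num) (by omega))
  have h2 : (2:ℕ) ^ (MF p r x + 1) ≤ 2 ^ i :=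
    Nat.pow_le_pow_right (by norm_num) (by rw [NF] at hi; omega)
  have h3 : (2:ℕ) ^ i ≤ p ^ i := Nat.pow_le_pow_left hp i
  omega

lemma kF_vanish (hp : 2 ≤ p) : ∀ i, NF p r x ≤ i → kF p r x i = 0 := by
  intro i hi
  exact kk_eq_zero_of_big (cF_vanish r x) (MF_lt hp hi)

lemma hm_split (hx : x ∈ SolSetD p d r m n) : m = x.2 0 + p * MF p r x := by
  obtain ⟨-, -, -, -, hm⟩ := hx
  have hsum : ∑ i ∈ Finset.range r, (x.1 i + x.2 (i + 1)) * p ^ (i + 1)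
      = p * MF p r x := by
    rw [MF, AA, Finset.mul_sum]
    apply Finset.sum_congr rfl
    intro i hi
    rw [cF]
    rw [if_pos (Finset.mem_range.mp hi), pow_succ]
    ring
  rw [← hm, hsum]

lemma hC_bound (hx : x ∈ SolSetD p d r m n) :
    (∑ i ∈ Finset.range (NF p r x), cF r x i) + x.2 0 ≤ n := by
  obtain ⟨-, hb, -, hn, -⟩ := hx
  have hstab : ∑ i ∈ Finset.range (NF p r x), cF r x i
      = ∑ i ∈ Finset.range r, cF r x i := by
    refine (Finset.sum_subset (Finset.range_subset_range.mpr (show r ≤ NF p r x by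
      rw [NF]; omega)) ?_).symm
    intro j _ hj
    exact cF_vanish r x j (by simpa using hj)
  have hsplit : ∑ i ∈ Finset.range r, cF r x i
      = ∑ i ∈ Finset.range r, x.1 i + ∑ i ∈ Finset.range r, x.2 (i + 1) := by
    rw [← Finset.sum_add_distrib]
    apply Finset.sum_congr rfl
    intro i hi
    rw [cF, if_pos (Finset.mem_range.mp hi)]
  have hb2 : ∑ i ∈ Finset.range r, x.2 (i + 1) + x.2 0
      = ∑ i ∈ Finset.range r, x.2 i + x.2 r := by
    calc ∑ i ∈ Finset.range r, x.2 (i + 1) + x.2 0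
        = ∑ i ∈ Finset.range (r + 1), x.2 i := (Finset.sum_range_succ' x.2 r).symm
      _ = ∑ i ∈ Finset.range r, x.2 i + x.2 r := Finset.sum_range_succ x.2 r
  have hbr : x.2 r = 0 := hb r le_rfl
  omega

lemma top_dig_ne (hp : 2 ≤ p) {h : ℕ}
    (hmem : h ∈ Tops (kF p r x) (NF p r x)) : dig p (MF p r x) h ≠ 0 := by
  obtain ⟨-, h1, h2⟩ := mem_Tops.mp hmem
  have := carry_rec hp (cF_vanish r x) (c := cF r x) h
  rw [show AA p (cF r x) r = MF p r x from rfl] at this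
  rw [show kk p (cF r x) = kF p r x from rfl] at this
  rw [h2] at this
  intro hdig
  rw [hdig] at this
  omega

lemma sum_topL (k : ℕ → ℕ) (N : ℕ) (F : ℕ → ℕ) :
    ((topL k N).map F).sum = ∑ h ∈ Tops k N, F h := by
  rw [topL, List.map_reverse, List.sum_reverse]
  have hperm : List.Perm (((Tops k N).sort (· ≤ ·)).map F) (((Tops k N).toList).map F) :=
    (Finset.sort_perm_toList _ _).map F
  rw [hperm.sum_eq, Finset.sum_map_toList]

lemma topL_length (k : ℕ → ℕ) (N : ℕ) : (topL k N).length = (Tops k N).card := by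
  rw [topL, List.length_reverse, Finset.length_sort]

/-- The mapped rank list is a strictly decreasing chain. -/
lemma chain_rk (hp : 2 ≤ p) :
    ((topL (kF p r x) (NF p r x)).map (rk p (MF p r x))).Chain' (· > ·) := by
  apply List.Pairwise.isChain
  apply pairwise_map_of_mem (D := fun h => h ∈ Tops (kF p r x) (NF p r x))
  · intro a ha
    exact mem_topL.mp ha
  · intro a b hDa hDb hab
    exact rk_lt hab (top_dig_ne hp hDb)
  · exact topL_pairwise _ _

/-- Main length bound for the encoding word. -/
lemma len_wAll (hp : 2 ≤ p) (hn : 1 ≤ n) (hx : x ∈ SolSetD p d r m n) :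
    (wAll p r x).length + 1 ≤ 7 * n := by
  classical
  set k := kF p r x with hk
  set N := NF p r x with hN
  set M := MF p r x with hM
  have hk0 : k 0 = 0 := kF_zero p r x
  have hkvan : ∀ i, N ≤ i → k i = 0 := kF_vanish hp
  set K := ∑ i ∈ Finset.range N, k i with hK
  set S := ∑ i ∈ Finset.range N, dig p M i with hS
  set C := ∑ i ∈ Finset.range N, cF r x i with hC
  set R := (Tops k N).card with hR
  set V := ((Finset.range N).filter (fun i => k i ≠ 0)).card with hV
  -- relations
  have hCn : C + x.2 0 ≤ n := hC_bound hx
  have htel : C + K = S + p * K := by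
    have := telescope hp (cF_vanish r x) (N := N) (kF_vanish hp N le_rfl)
    exact this
  have h2K : 2 * K ≤ p * K := Nat.mul_le_mul_right K hp
  have hVK : V ≤ K := by
    have h1 : V ≤ ∑ i ∈ (Finset.range N).filter (fun i => k i ≠ 0), k i := by
      have := Finset.card_nsmul_le_sum ((Finset.range N).filter (fun i => k i ≠ 0)) k 1
        (fun i hi => by
          have := (Finset.mem_filter.mp hi).2
          omega)
      simpa using this
    have h2 : ∑ i ∈ (Finset.range N).filter (fun i => k i ≠ 0), k i ≤ K :=
      Finset.sum_le_sum_of_subset (Finset.filter_subset _ _)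
    omega
  have hRV : R ≤ V := by
    apply Finset.card_le_card
    intro h hmem
    have := mem_Tops.mp hmem
    simp only [Finset.mem_filter, Finset.mem_range]
    exact ⟨this.1, this.2.1⟩
  -- length computation
  have hlen : (wAll p r x).length
      = 2 + R + ((gammaL p r x).sum + R)
        + (∑ h ∈ Tops k N, ((rdR k h).sum + lenR k h + 1)) + (ScL r x).length := by
    rw [wAll]
    simp only [List.length_cons, List.length_append, unary_length, unaryEnc_length,
      wEnc_length, wB, List.length_map]
    have hg : (gammaL p r x).length = R := by
      rw [gammaL, dEnc_length, List.length_map, topL_length]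
    have hrd : ((rdL p r x).map (fun vs => vs.sum + vs.length + 1)).sum
        = ∑ h ∈ Tops k N, ((rdR k h).sum + lenR k h + 1) := by
      rw [rdL, List.map_map]
      simp only [Function.comp_def, ← hk, ← hN]
      rw [sum_topL k N (fun h => (rdR k h).sum + (rdR k h).length + 1)]
      exact Finset.sum_congr rfl (fun h _ => by rw [rdR_length])
    rw [hg, hrd, topL_length]
    simp only [← hk, ← hN]
    omega
  -- bound the run part
  have hrun : ∑ h ∈ Tops k N, ((rdR k h).sum + lenR k h + 1) ≤ 2 * K + R := by
    have e1 : ∑ h ∈ Tops k N, (rdR k h).sum ≤ K := by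
      have h1 : ∑ h ∈ Tops k N, (rdR k h).sum
          = ∑ h ∈ Tops k N, ∑ o ∈ Finset.range (lenR k h), k (h - o) :=
        Finset.sum_congr rfl (fun h _ => rdR_sum k h)
      rw [h1]
      calc _ ≤ ∑ i ∈ (Finset.range N).filter (fun i => k i ≠ 0), k i :=
            run_sum_le hk0 N k
        _ ≤ K := Finset.sum_le_sum_of_subset (Finset.filter_subset _ _)
    have e2 : ∑ h ∈ Tops k N, lenR k h ≤ V := by
      have h1 : ∑ h ∈ Tops k N, lenR k h
          = ∑ h ∈ Tops k N, ∑ o ∈ Finset.range (lenR k h), (fun _ => 1) (h - o) := by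
        apply Finset.sum_congr rfl
        intro h _
        simp
      rw [h1]
      calc _ ≤ ∑ i ∈ (Finset.range N).filter (fun i => k i ≠ 0), 1 :=
            run_sum_le hk0 N (fun _ => 1)
        _ = V := by simp [hV]
    have e3 : ∑ h ∈ Tops k N, ((rdR k h).sum + lenR k h + 1)
        = ∑ h ∈ Tops k N, (rdR k h).sum + ∑ h ∈ Tops k N, lenR k h + R := by
      rw [Finset.sum_add_distrib, Finset.sum_add_distrib]
      simp [hR]
    omega
  -- bound the gamma part
  have hgam : (gammaL p r x).sum ≤ S := by
    rw [gammaL]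
    rcases hcase : (topL k N).map (rk p M) with _ | ⟨g0, gt⟩
    · simp [dEnc]
    · have hchain : (g0 :: gt).Chain' (· > ·) := by
        rw [← hcase]; exact chain_rk hp
      have := dEnc_sum g0 gt hchain
      have hg0 : g0 ≤ S := by
        have hmem : g0 ∈ (topL k N).map (rk p M) := by rw [hcase]; simp
        obtain ⟨h, hh, rfl⟩ := List.mem_map.mp hmem
        have hhN : h < N := (mem_Tops.mp (mem_topL.mp hh)).1
        exact rk_le hhN.le
      omega
  -- bound the support part
  have hsc : (ScL r x).length ≤ C := by
    rw [ScL, List.length_reverse, Finset.length_sort]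
    have h1 : ((Finset.range r).filter (fun i => cF r x i ≠ 0)).card
        ≤ ∑ i ∈ (Finset.range r).filter (fun i => cF r x i ≠ 0), cF r x i := by
      have := Finset.card_nsmul_le_sum ((Finset.range r).filter (fun i => cF r x i ≠ 0))
        (cF r x) 1 (fun i hi => by
          have := (Finset.mem_filter.mp hi).2
          omega)
      simpa using this
    have h2 : ∑ i ∈ (Finset.range r).filter (fun i => cF r x i ≠ 0), cF r x i ≤ C := by
      apply Finset.sum_le_sum_of_subset
      intro i hi
      simp only [Finset.mem_filter, Finset.mem_range] at hi ⊢
      have : r ≤ N := by rw [hN, NF]; omega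
      omega
    omega
  -- case split on K
  rcases Nat.eq_zero_or_pos K with hK0 | hK1
  · -- no carries at all: R = V = 0 and the gamma and run parts vanish
    have hR0 : R = 0 := by omega
    have hTopsEmpty : Tops k N = ∅ := Finset.card_eq_zero.mp hR0
    have hgam0 : (gammaL p r x).sum = 0 := by
      rw [gammaL, topL]
      simp only [← hk, ← hN]
      rw [hTopsEmpty]
      simp [dEnc]
    have hrun0 : ∑ h ∈ Tops k N, ((rdR k h).sum + lenR k h + 1) = 0 := by
      rw [hTopsEmpty]; simp
    rw [hlen, hgam0, hrun0, hR0]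
    omega
  · -- some carry exists, hence some digit is nonzero
    have hS1 : 1 ≤ S := by
      have hex : ∃ i ∈ Finset.range N, k i ≠ 0 :=
        Finset.exists_ne_zero_of_sum_ne_zero (by omega)
      obtain ⟨i, hiN, hi⟩ := hex
      obtain ⟨h, hih, hall, htop⟩ := exists_top hkvan hi
      have hmem : h ∈ Tops k N := top_mem_Tops hkvan (hall h hih le_rfl) htop
      have hdig : dig p M h ≠ 0 := top_dig_ne hp hmem
      have : dig p M h ≤ S := by
        apply Finset.single_le_sum (f := fun j => dig p M j) (fun j _ => Nat.zero_le _)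
        exact Finset.mem_range.mpr (mem_Tops.mp hmem).1
      omega
    rw [hlen]
    have hfin : 2 + R + (S + R) + (2 * K + R) + C + 1 ≤ 7 * n := by
      generalize hPK : p * K = PK at htel h2K
      omega
    omega

end Sol

end Stmt13Aux

namespace Stmt13Aux

/-- Extensionality for carry sequences from equal tops and equal run data. -/
lemma k_ext_aux {k k' : ℕ → ℕ} {N : ℕ} (hk0 : k 0 = 0)
    (hkN : ∀ i, N ≤ i → k i = 0)
    (hT : Tops k N = Tops k' N) (hrd : ∀ h ∈ Tops k N, rdR k h = rdR k' h)
    {i : ℕ} (hi : k i ≠ 0) : k i = k' i := by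
  obtain ⟨h, hih, hall, htop⟩ := exists_top hkN hi
  have hmem : h ∈ Tops k N := top_mem_Tops hkN (hall h hih le_rfl) htop
  have hrdh := hrd h hmem
  have hlen : lenR k h = lenR k' h := by
    rw [← rdR_length k, ← rdR_length k', hrdh]
  have ho : h - i < lenR k h := by
    apply lt_lenR hk0
    intro o' ho'
    exact hall (h - o') (by omega) (by omega)
  have ho' : h - i < lenR k' h := by omega
  have e1 : (rdR k h)[h - i]'(by simpa using ho) = k (h - (h - i)) := rdR_getElem k ho
  have e2 : (rdR k' h)[h - i]'(by simpa using ho') = k' (h - (h - i)) :=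
    rdR_getElem k' ho'
  have hsub : h - (h - i) = i := by omega
  rw [hsub] at e1 e2
  rw [← e1, ← e2]
  simp only [hrdh]

section Inj

variable {p : ℕ} {d : ℕ → ℕ} {r m n : ℕ}

/-- Main injectivity: the word `wAll` determines the solution. -/
lemma wAll_inj (hp : 2 ≤ p) (hr : 1 ≤ r) {x y : (ℕ → ℕ) × (ℕ → ℕ)}
    (hx : x ∈ SolSetD p d r m n) (hy : y ∈ SolSetD p d r m n)
    (hw : wAll p r x = wAll p r y) : x = y := by
  have hppos : 0 < p := by omega
  have hmx := hm_split hx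
  have hmy := hm_split hy
  have hk0x : kF p r x 0 = 0 := kF_zero p r x
  have hk0y : kF p r y 0 = 0 := kF_zero p r y
  have hkvx : ∀ i, NF p r x ≤ i → kF p r x i = 0 := kF_vanish hp
  have hkvy : ∀ i, NF p r y ≤ i → kF p r y i = 0 := kF_vanish hp
  obtain ⟨hax, hbx, hbdx, -, -⟩ := hx
  obtain ⟨hay, hby, hbdy, -, -⟩ := hy
  rw [wAll, wAll, List.cons.injEq] at hw
  -- step 1 : b 0 agrees
  have hb0 : x.2 0 = y.2 0 := by
    have hflag0 : (x.2 0 = 0) ↔ (y.2 0 = 0) := decide_eq_decide.mp hw.1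
    by_cases h0 : x.2 0 = 0
    · exact h0.trans (hflag0.mp h0).symm
    · have h0' : ¬ y.2 0 = 0 := fun hc => h0 (hflag0.mpr hc)
      rcases hbdx 0 (by omega) with e1 | e1
      · exact absurd e1 h0
      rcases hbdy 0 (by omega) with e2 | e2
      · exact absurd e2 h0'
      rw [e1, e2]
  -- step 2 : M agrees
  have hM : MF p r x = MF p r y := by
    have h1 : x.2 0 + p * MF p r x = y.2 0 + p * MF p r y := by rw [← hmx, ← hmy]
    rw [hb0] at h1
    exact Nat.eq_of_mul_eq_mul_left hppos (by omega)
  have hN : NF p r x = NF p r y := by rw [NF, NF, hM]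
  -- step 3 : peel the word
  obtain ⟨hlenT, hrest⟩ := unary_append_inj _ _ _ _ hw.2
  have hglen : (gammaL p r x).length = (gammaL p r y).length := by
    rw [gammaL, gammaL, dEnc_length, dEnc_length, List.length_map, List.length_map,
      hlenT]
  obtain ⟨hgam, hrest2⟩ := unaryEnc_append_inj _ _ _ _ hglen hrest
  have hrdlen : (rdL p r x).length = (rdL p r y).length := by
    rw [rdL, rdL, List.length_map, List.length_map, hlenT]
  obtain ⟨hrdL, hwB⟩ := wEnc_append_inj _ _ _ _ hrdlen
    (fun vs hvs v hv => by
      rw [rdL] at hvs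
      obtain ⟨h, -, rfl⟩ := List.mem_map.mp hvs
      exact rdR_ne_zero hk0x hv)
    (fun vs hvs v hv => by
      rw [rdL] at hvs
      obtain ⟨h, -, rfl⟩ := List.mem_map.mp hvs
      exact rdR_ne_zero hk0y hv)
    hrest2
  -- step 4 : topL agrees
  have htopL : topL (kF p r x) (NF p r x) = topL (kF p r y) (NF p r y) := by
    have hchx : ((topL (kF p r x) (NF p r x)).map (rk p (MF p r x))).Chain' (· > ·) :=
      chain_rk hp
    have hchy : ((topL (kF p r y) (NF p r y)).map (rk p (MF p r y))).Chain' (· > ·) :=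
      chain_rk hp
    rw [← hM] at hchy
    have hde : dEnc ((topL (kF p r x) (NF p r x)).map (rk p (MF p r x)))
        = dEnc ((topL (kF p r y) (NF p r y)).map (rk p (MF p r x))) := by
      have h1 := hgam
      rw [gammaL, gammaL, ← hM] at h1
      exact h1
    have hmap := dEnc_inj _ _ hchx hchy hde
    apply map_injOn_eq (rk p (MF p r x)) _ _ ?_ hmap
    intro a ha b hb hab
    have hda : dig p (MF p r x) a ≠ 0 := top_dig_ne hp (mem_topL.mp ha)
    have hdb : dig p (MF p r x) b ≠ 0 := by
      rw [hM]
      exact top_dig_ne hp (mem_topL.mp hb)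
    rcases lt_trichotomy a b with hl | hl | hl
    · exact absurd hab (Nat.ne_of_lt (rk_lt hl hda))
    · exact hl
    · exact absurd hab.symm (Nat.ne_of_lt (rk_lt hl hdb))
  -- step 5 : Tops agree (with the same bound N of x)
  have hTops : Tops (kF p r x) (NF p r x) = Tops (kF p r y) (NF p r x) := by
    have h1 : Tops (kF p r x) (NF p r x) = Tops (kF p r y) (NF p r y) :=
      Finset.ext fun h => by rw [← mem_topL, ← mem_topL, htopL]
    rw [h1, hN]
  -- step 6 : run data agree
  have hrdeq : ∀ h ∈ Tops (kF p r x) (NF p r x), rdR (kF p r x) h = rdR (kF p r y) h := by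
    have h1 := hrdL
    rw [rdL, rdL, ← htopL] at h1
    intro h hh
    exact map_eq_map_mem _ h1 h (mem_topL.mpr hh)
  -- step 7 : carries agree
  have hkvy' : ∀ i, NF p r x ≤ i → kF p r y i = 0 := by
    rw [hN]; exact hkvy
  have hkeq : kF p r x = kF p r y := by
    funext i
    by_cases h1 : kF p r x i = 0
    · by_cases h2 : kF p r y i = 0
      · rw [h1, h2]
      · have := k_ext_aux hk0y hkvy' hTops.symm
          (fun h hh => (hrdeq h (hTops.symm ▸ hh)).symm) h2
        omega
    · exact k_ext_aux hk0x hkvx hTops hrdeq h1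
  -- step 8 : digits agree
  have hceq : ∀ i, cF r x i = cF r y i := by
    intro i
    have e1 := carry_rec hp (cF_vanish r x) (c := cF r x) i
    have e2 := carry_rec hp (cF_vanish r y) (c := cF r y) i
    have hkk : kk p (cF r x) = kk p (cF r y) := hkeq
    rw [show AA p (cF r x) r = MF p r x from rfl] at e1
    rw [show AA p (cF r y) r = MF p r y from rfl, ← hM, ← hkk] at e2
    generalize p * kk p (cF r x) (i + 1) = P at e1 e2
    omega
  -- step 9 : second components agree
  have hbeq : x.2 = y.2 := by
    funext i
    cases i with
    | zero => exact hb0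
    | succ j =>
      by_cases hjr : r ≤ j + 1
      · rw [hbx _ hjr, hby _ hjr]
      · have hjr' : j < r := by omega
        by_cases hcj : cF r x j = 0
        · have h1 : x.1 j + x.2 (j + 1) = 0 := by
            rw [cF, if_pos hjr'] at hcj; exact hcj
          have hcj2 : cF r y j = 0 := by rw [← hceq j]; exact hcj
          have h2 : y.1 j + y.2 (j + 1) = 0 := by
            rw [cF, if_pos hjr'] at hcj2; exact hcj2
          omega
        · have hmemS : j ∈ ScL r x := by
            rw [ScL, List.mem_reverse, Finset.mem_sort, Finset.mem_filter,
              Finset.mem_range]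
            exact ⟨hjr', hcj⟩
          have hScEq : ScL r x = ScL r y := by
            rw [ScL, ScL]
            have hfil : (Finset.range r).filter (fun i => cF r x i ≠ 0)
                = (Finset.range r).filter (fun i => cF r y i ≠ 0) := by
              apply Finset.filter_congr
              intro i _
              rw [hceq i]
            rw [hfil]
          have hwB2 : (ScL r x).map (fun i => decide (x.2 (i + 1) = 0))
              = (ScL r x).map (fun i => decide (y.2 (i + 1) = 0)) := by
            have h1 := hwB
            rw [wB, wB, ← hScEq] at h1
            exact h1
          have hflag : (x.2 (j + 1) = 0) ↔ (y.2 (j + 1) = 0) :=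
            decide_eq_decide.mp (map_eq_map_mem _ hwB2 j hmemS)
          by_cases hx0 : x.2 (j + 1) = 0
          · exact hx0.trans (hflag.mp hx0).symm
          · have hy0 : ¬ y.2 (j + 1) = 0 := fun hc => hx0 (hflag.mpr hc)
            rcases hbdx (j + 1) (by omega) with e | e
            · exact absurd e hx0
            rcases hbdy (j + 1) (by omega) with e' | e'
            · exact absurd e' hy0
            rw [e, e']
  -- step 10 : first components agree
  have haeq : x.1 = y.1 := by
    funext i
    by_cases hir : r ≤ i
    · rw [hax _ hir, hay _ hir]
    · have h1 : cF r x i = x.1 i + x.2 (i + 1) := by rw [cF, if_pos (by omega)]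
      have h2 : cF r y i = y.1 i + y.2 (i + 1) := by rw [cF, if_pos (by omega)]
      have h3 := hceq i
      have h4 : x.2 (i + 1) = y.2 (i + 1) := by rw [hbeq]
      omega
  exact Prod.ext haeq hbeq

end Inj

end Stmt13Aux

open Stmt13Aux

/-- `N_r^d(m,n)`, the number of solutions of the extended linear system. -/
noncomputable def NcardD (p : ℕ) (d : ℕ → ℕ) (r m n : ℕ) : ℕ := Nat.card (SolSetD p d r m n)

/-- for a prime `p`, a sequence `d` of positive integers, `n ≥ 1`,
`m ≥ 0` and `r ≥ 1`, one has `N_r^d(m,n) ≤ n · 4^n · e^{2πn/√3}`. -/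
theorem stmt13 (p : ℕ) (hp : p.Prime) (d : ℕ → ℕ) (hd : ∀ i, 0 < d i)
    (n : ℕ) (hn : 1 ≤ n) (m r : ℕ) (hr : 1 ≤ r) :
    (NcardD p d r m n : ℝ) ≤ n * 4 ^ n * Real.exp (2 * Real.pi * n / Real.sqrt 3) := by
  have hp2 : 2 ≤ p := hp.two_le
  have hcard : NcardD p d r m n ≤ 2 ^ (7 * n) := by
    rw [NcardD]
    have hinj : Function.Injective (fun z : (SolSetD p d r m n) =>
        (⟨natEnc (wAll p r z.1), by
          have hlen := len_wAll hp2 hn z.2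
          calc natEnc (wAll p r z.1) < 2 ^ ((wAll p r z.1).length + 1) := natEnc_lt _
            _ ≤ 2 ^ (7 * n) := Nat.pow_le_pow_right (by norm_num) hlen⟩ :
          Fin (2 ^ (7 * n)))) := by
      intro z z' hzz
      have h1 : natEnc (wAll p r z.1) = natEnc (wAll p r z'.1) := by
        simpa [Fin.mk.injEq] using hzz
      have h2 := natEnc_inj _ _ h1
      exact Subtype.ext (wAll_inj hp2 hr z.2 z'.2 h2)
    have := Nat.card_le_card_of_injective _ hinj
    simpa using this
  have h1 : (NcardD p d r m n : ℝ) ≤ (2:ℝ) ^ (7 * n) := by exact_mod_cast hcard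
  have hsqrtpos : 0 < Real.sqrt 3 := Real.sqrt_pos.mpr (by norm_num)
  have hsqrt : Real.sqrt 3 ≤ 1.74 := by
    rw [show (1.74:ℝ) = Real.sqrt (1.74 ^ 2) from (Real.sqrt_sq (by norm_num)).symm]
    exact Real.sqrt_le_sqrt (by norm_num)
  have hpi : 3.14 ≤ Real.pi := by linarith [Real.pi_gt_d6]
  have hlog2 : Real.log 2 < 0.6931471808 := Real.log_two_lt_d9
  have hexp : (32:ℝ) ^ n ≤ Real.exp (2 * Real.pi * n / Real.sqrt 3) := by
    have hl32 : Real.log 32 = 5 * Real.log 2 := by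
      rw [show (32:ℝ) = 2 ^ (5:ℕ) by norm_num, Real.log_pow]
      push_cast; ring
    have harg : (n : ℝ) * Real.log 32 ≤ 2 * Real.pi * n / Real.sqrt 3 := by
      have hb : Real.log 32 ≤ 3.47 := by rw [hl32]; nlinarith
      have hc : (3.47:ℝ) ≤ 2 * Real.pi / Real.sqrt 3 := by
        rw [le_div_iff₀ hsqrtpos]
        nlinarith
      have hn0 : (0:ℝ) ≤ n := Nat.cast_nonneg n
      calc (n:ℝ) * Real.log 32 ≤ (n:ℝ) * (2 * Real.pi / Real.sqrt 3) :=
            mul_le_mul_of_nonneg_left (hb.trans hc) hn0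
        _ = 2 * Real.pi * n / Real.sqrt 3 := by ring
    calc (32:ℝ) ^ n = Real.exp (Real.log 32) ^ n := by rw [Real.exp_log (by norm_num)]
      _ = Real.exp (n * Real.log 32) := by rw [← Real.exp_nat_mul]
      _ ≤ _ := Real.exp_le_exp.mpr harg
  have hn1 : (1:ℝ) ≤ n := by exact_mod_cast hn
  have hpow : (2:ℝ) ^ (7 * n) = 4 ^ n * 32 ^ n := by
    rw [pow_mul, ← mul_pow]
    norm_num
  have hE : (0:ℝ) ≤ Real.exp (2 * Real.pi * n / Real.sqrt 3) := (Real.exp_pos _).le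
  calc (NcardD p d r m n : ℝ) ≤ (2:ℝ) ^ (7 * n) := h1
    _ = 4 ^ n * 32 ^ n := hpow
    _ ≤ 4 ^ n * Real.exp (2 * Real.pi * n / Real.sqrt 3) :=
        mul_le_mul_of_nonneg_left hexp (by positivity)
    _ ≤ n * 4 ^ n * Real.exp (2 * Real.pi * n / Real.sqrt 3) := by
        nlinarith [pow_pos (show (0:ℝ) < 4 by norm_num) n, hE,
          mul_le_mul_of_nonneg_right hn1
            (mul_nonneg (le_of_lt (pow_pos (show (0:ℝ) < 4 by norm_num) n)) hE)]
end

section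
/- Let p be a prime. Then for every integer n ≥ 1 and all integers m ≥ 0 and r ≥ 1, N_r(m,n) ≤ n · 4^n · e^{2πn/√3}; in particular N(m,n) ≤ n · 4^n · e^{2πn/√3} for all m ≥ 0. -/
open Finset

/-- The set `S_r(m,n)` of solutions of the linear system, encoded as pairs of
finitely supported sequences `(a, b) : (ℕ → ℕ) × (ℕ → ℕ)` where index `i`
(for `0 ≤ i < r`) corresponds to `a_{i+1}`, `b_{i+1}`. -/
def SolSet (p r m n : ℕ) : Set ((ℕ → ℕ) × (ℕ → ℕ)) :=
  {ab | (∀ i, r ≤ i → ab.1 i = 0) ∧ (∀ i, r ≤ i → ab.2 i = 0) ∧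
        (∀ i, ab.2 i ≤ 1) ∧
        2 * (∑ i ∈ Finset.range r, ab.1 i) + ∑ i ∈ Finset.range r, ab.2 i = n ∧
        ab.2 0 + ∑ i ∈ Finset.range r, (ab.1 i + ab.2 (i + 1)) * p ^ (i + 1) = m}

/-- `N_r(m,n)`, the number of solutions of the linear system. -/
noncomputable def Ncard (p r m n : ℕ) : ℕ := Nat.card (SolSet p r m n)

/-- The stable value `N(m,n)` (for `p ≥ 2` one has `p ^ (m+1) > m`, so `r = m + 1`
is in the stable range), with the convention that it vanishes for negative arguments. -/
noncomputable def Nstab (p : ℕ) (m n : ℤ) : ℕ :=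
  if 0 ≤ m ∧ 0 ≤ n then Ncard p (m.toNat + 1) m.toNat n.toNat else 0


namespace Stmt14X

/-- Strictly monotone functions on a finset with equal images agree pointwise. -/
lemma sm_eq (S : Finset ℕ) (φ ψ : ℕ → ℕ) (hφ : ∀ a ∈ S, ∀ b ∈ S, a < b → φ a < φ b)
    (hψ : ∀ a ∈ S, ∀ b ∈ S, a < b → ψ a < ψ b) (h : S.image φ = S.image ψ) :
    ∀ a ∈ S, φ a = ψ a := by
  classical
  induction S using Finset.strongInduction with
  | _ S ih =>
    rcases S.eq_empty_or_nonempty with rfl | hS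
    · simp
    · have hMs : S.max' hS ∈ S := S.max'_mem hS
      have hM : φ (S.max' hS) = ψ (S.max' hS) := by
        have h1 : φ (S.max' hS) ∈ S.image ψ := by
          rw [← h]; exact mem_image_of_mem φ hMs
        have h2 : ψ (S.max' hS) ∈ S.image φ := by
          rw [h]; exact mem_image_of_mem ψ hMs
        obtain ⟨x, hx, hxe⟩ := mem_image.1 h1
        obtain ⟨y, hy, hye⟩ := mem_image.1 h2
        have hx' : ψ x ≤ ψ (S.max' hS) := by
          rcases eq_or_lt_of_le (S.le_max' x hx) with h' | h'
          · rw [h']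
          · exact le_of_lt (hψ x hx _ hMs h')
        have hy' : φ y ≤ φ (S.max' hS) := by
          rcases eq_or_lt_of_le (S.le_max' y hy) with h' | h'
          · rw [h']
          · exact le_of_lt (hφ y hy _ hMs h')
        omega
      intro a ha
      rcases eq_or_lt_of_le (S.le_max' a ha) with h' | h'
      · rw [h', hM]
      · have hsub : S.erase (S.max' hS) ⊂ S := erase_ssubset hMs
        have himg : ∀ (χ : ℕ → ℕ), (∀ a ∈ S, ∀ b ∈ S, a < b → χ a < χ b) →
            (S.erase (S.max' hS)).image χ = (S.image χ).erase (χ (S.max' hS)) := by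
          intro χ hχ
          ext y
          constructor
          · intro hy
            obtain ⟨x, hx, rfl⟩ := mem_image.1 hy
            have hx1 : x ≠ S.max' hS := (mem_erase.1 hx).1
            have hx2 : x ∈ S := (mem_erase.1 hx).2
            have hxlt : x < S.max' hS := lt_of_le_of_ne (S.le_max' x hx2) hx1
            exact mem_erase.2 ⟨ne_of_lt (hχ x hx2 _ hMs hxlt), mem_image_of_mem χ hx2⟩
          · intro hy
            have hy1 := (mem_erase.1 hy).1
            obtain ⟨x, hx, rfl⟩ := mem_image.1 (mem_erase.1 hy).2
            refine mem_image_of_mem χ (mem_erase.2 ⟨?_, hx⟩)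
            rintro rfl; exact hy1 rfl
        have := ih (S.erase (S.max' hS)) hsub
          (fun a ha b hb hab => hφ a (mem_of_mem_erase ha) b (mem_of_mem_erase hb) hab)
          (fun a ha b hb hab => hψ a (mem_of_mem_erase ha) b (mem_of_mem_erase hb) hab)
          (by rw [himg φ hφ, himg ψ hψ, h, hM])
        exact this a (mem_erase.2 ⟨ne_of_lt h', ha⟩)

/-- Prefix sums over a finset determine the values. -/
lemma ps_eq (S : Finset ℕ) (f g : ℕ → ℕ)
    (h : ∀ t ∈ S, ∑ x ∈ S.filter (· ≤ t), f x = ∑ x ∈ S.filter (· ≤ t), g x) :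
    ∀ t ∈ S, f t = g t := by
  classical
  have hstrict : ∀ t ∈ S, ∑ x ∈ S.filter (· < t), f x = ∑ x ∈ S.filter (· < t), g x := by
    intro t ht
    rcases (S.filter (· < t)).eq_empty_or_nonempty with he | hne
    · rw [he]; simp
    · set t₀ := (S.filter (· < t)).max' hne with ht₀def
      have ht₀m := (S.filter (· < t)).max'_mem hne
      have ht₀S : t₀ ∈ S := (mem_filter.1 ht₀m).1
      have ht₀lt : t₀ < t := (mem_filter.1 ht₀m).2
      have heq : S.filter (· < t) = S.filter (· ≤ t₀) := by
        ext x
        simp only [mem_filter]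
        constructor
        · rintro ⟨hx, hxt⟩
          refine ⟨hx, (S.filter (· < t)).le_max' x (mem_filter.2 ⟨hx, hxt⟩)⟩
        · rintro ⟨hx, hxt⟩
          exact ⟨hx, lt_of_le_of_lt hxt ht₀lt⟩
      rw [heq]
      exact h t₀ ht₀S
  intro t ht
  have h1 : S.filter (· ≤ t) = insert t (S.filter (· < t)) := by
    ext x
    simp only [mem_filter, mem_insert]
    constructor
    · rintro ⟨hx, hxt⟩
      rcases eq_or_lt_of_le hxt with h' | h'
      · exact Or.inl h'
      · exact Or.inr ⟨hx, h'⟩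
    · rintro (rfl | ⟨hx, hxt⟩)
      · exact ⟨ht, le_rfl⟩
      · exact ⟨hx, le_of_lt hxt⟩
  have h2 : t ∉ S.filter (· < t) := by simp
  have h3 := h t ht
  rw [h1, Finset.sum_insert h2, Finset.sum_insert h2, hstrict t ht] at h3
  omega

/-- equal images under a function injective on a superset give equal sets -/
lemma image_injOn_eq (s t u : Finset ℕ) (f : ℕ → ℕ) (hs : s ⊆ u) (ht : t ⊆ u)
    (hf : ∀ a ∈ u, ∀ b ∈ u, f a = f b → a = b) (h : s.image f = t.image f) : s = t := by
  ext a
  constructor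
  · intro ha
    have : f a ∈ t.image f := by rw [← h]; exact mem_image_of_mem f ha
    obtain ⟨b, hb, hba⟩ := mem_image.1 this
    rwa [hf b (ht hb) a (hs ha) hba] at hb
  · intro ha
    have : f a ∈ s.image f := by rw [h]; exact mem_image_of_mem f ha
    obtain ⟨b, hb, hba⟩ := mem_image.1 this
    rwa [hf b (hs hb) a (ht ha) hba] at hb

/-- the rank function is strictly monotone on u -/
lemma rank_strictMono (u : Finset ℕ) :
    ∀ a ∈ u, ∀ b ∈ u, a < b → (u.filter (· < a)).card < (u.filter (· < b)).card := by
  intro a ha b hb hab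
  apply Finset.card_lt_card
  constructor
  · intro x hx
    have hx' := mem_filter.1 hx
    exact mem_filter.2 ⟨hx'.1, lt_trans hx'.2 hab⟩
  · intro hsub
    have h1 : a ∈ u.filter (· < b) := mem_filter.2 ⟨ha, hab⟩
    have h2 := mem_filter.1 (hsub h1)
    omega

/-- `c`-sequence attached to a solution. -/
def cf (ab : (ℕ → ℕ) × (ℕ → ℕ)) : ℕ → ℕ :=
  fun i => if i = 0 then ab.2 0 else ab.1 (i - 1) + ab.2 i

/-- carry sequence -/
def ef (p : ℕ) (c : ℕ → ℕ) : ℕ → ℕ := fun i => (∑ j ∈ range i, c j * p ^ j) / p ^ i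

/-- digits of m -/
def df (p m : ℕ) : ℕ → ℕ := fun i => m / p ^ i % p

lemma sum_full {p m K r : ℕ} {c : ℕ → ℕ} (hrK : r + 1 ≤ K)
    (hsupp : ∀ i, r + 1 ≤ i → c i = 0) (hm : m = ∑ i ∈ range K, c i * p ^ i) :
    ∀ i, K ≤ i → (∑ j ∈ range i, c j * p ^ j) = m := by
  intro i hi
  rw [hm]
  symm
  apply Finset.sum_subset (range_subset_range.2 hi)
  intro x _ hx
  rw [mem_range, Nat.not_lt] at hx
  rw [hsupp x (le_trans hrK hx)]
  ring

lemma e_spec {p m K r : ℕ} {c : ℕ → ℕ} (hrK : r + 1 ≤ K)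
    (hsupp : ∀ i, r + 1 ≤ i → c i = 0) (hm : m = ∑ i ∈ range K, c i * p ^ i) :
    ∀ i, ∑ j ∈ range i, c j * p ^ j = p ^ i * ef p c i + m % p ^ i := by
  intro i
  have hfull := sum_full hrK hsupp hm (max i K) (le_max_right _ _)
  have hsplit : ∑ j ∈ range (max i K), c j * p ^ j
      = (∑ j ∈ range i, c j * p ^ j) + ∑ j ∈ Ico i (max i K), c j * p ^ j := by
    rw [← Finset.sum_range_add_sum_Ico _ (le_max_left i K)]
  have hdvd : p ^ i ∣ ∑ j ∈ Ico i (max i K), c j * p ^ j := by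
    apply Finset.dvd_sum
    intro j hj
    exact Dvd.dvd.mul_left (pow_dvd_pow p (mem_Ico.1 hj).1) _
  obtain ⟨t, ht⟩ := hdvd
  have hmod : m % p ^ i = (∑ j ∈ range i, c j * p ^ j) % p ^ i := by
    rw [← hfull, hsplit, ht, Nat.add_mul_mod_self_left]
  rw [hmod, ef]
  exact (Nat.div_add_mod _ _).symm

lemma key_id {p m K r : ℕ} {c : ℕ → ℕ} (hp : 2 ≤ p) (hrK : r + 1 ≤ K)
    (hsupp : ∀ i, r + 1 ≤ i → c i = 0) (hm : m = ∑ i ∈ range K, c i * p ^ i) :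
    ∀ i, c i + ef p c i = df p m i + p * ef p c (i + 1) := by
  intro i
  have h1 := e_spec hrK hsupp hm i
  have h2 := e_spec hrK hsupp hm (i + 1)
  rw [Finset.sum_range_succ, h1] at h2
  have hmod : m % p ^ (i + 1) = p ^ i * df p m i + m % p ^ i := by
    rw [df, Nat.mod_pow_succ]; ring
  rw [hmod] at h2
  have hpi : 0 < p ^ i := pow_pos (by omega) i
  have h3 : p ^ i * (p * ef p c (i + 1) + df p m i) = p ^ i * (ef p c i + c i) := by
    rw [pow_succ] at h2; ring_nf; ring_nf at h2; omega
  have := Nat.eq_of_mul_eq_mul_left hpi h3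
  omega

lemma e_zero {p : ℕ} {c : ℕ → ℕ} : ef p c 0 = 0 := by
  simp [ef]

lemma e_high {p m K r : ℕ} {c : ℕ → ℕ} (hp : 2 ≤ p) (hrK : r + 1 ≤ K)
    (hsupp : ∀ i, r + 1 ≤ i → c i = 0) (hm : m = ∑ i ∈ range K, c i * p ^ i)
    (hK : m < p ^ K) : ∀ i, K ≤ i → ef p c i = 0 := by
  intro i hi
  rw [ef, sum_full hrK hsupp hm i hi]
  exact Nat.div_eq_of_lt (lt_of_lt_of_le hK (pow_le_pow_right₀ (by omega) hi))

lemma sums_le {p m n K r : ℕ} {c : ℕ → ℕ} (hp : 2 ≤ p) (hrK : r + 1 ≤ K)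
    (hsupp : ∀ i, r + 1 ≤ i → c i = 0) (hm : m = ∑ i ∈ range K, c i * p ^ i)
    (hn : ∑ i ∈ range K, c i ≤ n) (hK : m < p ^ K) :
    (∑ i ∈ range K, df p m i) ≤ n ∧ (∑ i ∈ range K, ef p c i) ≤ n := by
  have hkey := key_id hp hrK hsupp hm
  have hsum : (∑ i ∈ range K, c i) + (∑ i ∈ range K, ef p c i)
      = (∑ i ∈ range K, df p m i) + p * ∑ i ∈ range K, ef p c (i + 1) := by
    rw [← Finset.sum_add_distrib, Finset.mul_sum, ← Finset.sum_add_distrib]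
    exact Finset.sum_congr rfl (fun i _ => hkey i)
  have hshift : ∑ i ∈ range K, ef p c (i + 1) = ∑ i ∈ range K, ef p c i := by
    have h1 : ∑ i ∈ range (K + 1), ef p c i
        = (∑ i ∈ range K, ef p c (i + 1)) + ef p c 0 := Finset.sum_range_succ' _ _
    have h2 : ∑ i ∈ range (K + 1), ef p c i
        = (∑ i ∈ range K, ef p c i) + ef p c K := Finset.sum_range_succ _ _
    rw [e_high hp hrK hsupp hm hK K le_rfl] at h2
    rw [e_zero] at h1
    omega
  rw [hshift] at hsum
  have h2 : 2 * (∑ i ∈ range K, ef p c i) ≤ p * ∑ i ∈ range K, ef p c i :=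
    Nat.mul_le_mul_right _ hp
  omega
def Tset (p K : ℕ) (c : ℕ → ℕ) : Finset ℕ := (range K).filter (fun i => ef p c i ≠ 0)

def DFset (p m K : ℕ) : Finset ℕ := (range K).filter (fun i => df p m i ≠ 0)

def TopSet (p K : ℕ) (c : ℕ → ℕ) : Finset ℕ :=
  (Tset p K c).filter (fun t => ef p c (t + 1) = 0)

def ff (p K : ℕ) (c : ℕ → ℕ) (t : ℕ) : ℕ :=
  ((Tset p K c).filter (fun i => i ≤ t ∧ Finset.Icc i t ⊆ Tset p K c)).card

lemma mem_Tset {p m K r : ℕ} {c : ℕ → ℕ} (hp : 2 ≤ p) (hrK : r + 1 ≤ K)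
    (hsupp : ∀ i, r + 1 ≤ i → c i = 0) (hm : m = ∑ i ∈ range K, c i * p ^ i)
    (hK : m < p ^ K) : ∀ i, i ∈ Tset p K c ↔ ef p c i ≠ 0 := by
  intro i
  rw [Tset, mem_filter, mem_range]
  constructor
  · exact fun h => h.2
  · intro h
    refine ⟨?_, h⟩
    by_contra hi
    exact h (e_high hp hrK hsupp hm hK i (by omega))

lemma d_high {p m K : ℕ} (hp : 2 ≤ p) (hK : m < p ^ K) :
    ∀ i, K ≤ i → df p m i = 0 := by
  intro i hi
  rw [df, Nat.div_eq_of_lt (lt_of_lt_of_le hK (pow_le_pow_right₀ (by omega) hi))]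
  simp

lemma mem_DFset {p m K : ℕ} (hp : 2 ≤ p) (hK : m < p ^ K) :
    ∀ i, i ∈ DFset p m K ↔ df p m i ≠ 0 := by
  intro i
  rw [DFset, mem_filter, mem_range]
  constructor
  · exact fun h => h.2
  · intro h
    refine ⟨?_, h⟩
    by_contra hi
    exact h (d_high hp hK i (by omega))

lemma runfilter_eq {p K : ℕ} {c : ℕ → ℕ} (t : ℕ) :
    (Tset p K c).filter (fun i => i ≤ t ∧ Finset.Icc i t ⊆ Tset p K c)
      = Finset.Icc (t + 1 - ff p K c t) t := by
  classical
  set T := Tset p K c with hT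
  set R := T.filter (fun i => i ≤ t ∧ Finset.Icc i t ⊆ T) with hR
  by_cases ht : t ∈ T
  · have htR : t ∈ R := by
      rw [hR, mem_filter]
      exact ⟨ht, le_rfl, by rw [Finset.Icc_self]; simpa using ht⟩
    have hne : R.Nonempty := ⟨t, htR⟩
    have hmm := R.min'_mem hne
    have hminP := mem_filter.1 hmm
    obtain ⟨μ, hμ⟩ : ∃ μ, R.min' hne = μ := ⟨_, rfl⟩
    have hRIcc : R = Finset.Icc μ t := by
      rw [← hμ]
      ext x
      rw [Finset.mem_Icc]
      constructor
      · intro hx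
        exact ⟨R.min'_le x hx, (mem_filter.1 hx).2.1⟩
      · rintro ⟨h1, h2⟩
        rw [hR, mem_filter]
        refine ⟨hminP.2.2 (Finset.mem_Icc.2 ⟨h1, h2⟩), h2, ?_⟩
        exact fun y hy => hminP.2.2 (Finset.mem_Icc.2
          ⟨le_trans h1 (Finset.mem_Icc.1 hy).1, (Finset.mem_Icc.1 hy).2⟩)
    have hcard : ff p K c t = t + 1 - μ := by
      rw [show ff p K c t = R.card from rfl, hRIcc, Nat.card_Icc]
    rw [hcard, hRIcc]
    congr 1
    have h1 := hminP.2.1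
    rw [hμ] at h1
    omega
  · have hRempty : R = ∅ := by
      rw [hR]
      apply Finset.filter_eq_empty_iff.2
      rintro x hx ⟨h1, h2⟩
      exact ht (h2 (Finset.mem_Icc.2 ⟨h1, le_rfl⟩))
    have hz : ff p K c t = 0 := by
      rw [show ff p K c t = R.card from rfl, hRempty]; simp
    rw [hRempty, hz, Finset.Icc_eq_empty (by omega)]

lemma cover_T {p m K r : ℕ} {c : ℕ → ℕ} (hp : 2 ≤ p) (hrK : r + 1 ≤ K)
    (hsupp : ∀ i, r + 1 ≤ i → c i = 0) (hm : m = ∑ i ∈ range K, c i * p ^ i)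
    (hK : m < p ^ K) :
    Tset p K c = (TopSet p K c).biUnion (fun t => Finset.Icc (t + 1 - ff p K c t) t) := by
  classical
  apply Finset.Subset.antisymm
  · intro i hi
    have hex : ∃ j, i ≤ j ∧ ef p c (j + 1) = 0 :=
      ⟨K, by
        refine ⟨?_, e_high hp hrK hsupp hm hK (K + 1) (by omega)⟩
        have := (mem_filter.1 hi).1
        rw [mem_range] at this
        omega⟩
    set α := Nat.find hex with hα
    have hspec := Nat.find_spec hex
    have hIcc : Finset.Icc i α ⊆ Tset p K c := by
      intro x hx
      rw [Finset.mem_Icc] at hx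
      rw [mem_Tset hp hrK hsupp hm hK]
      rcases Nat.eq_or_lt_of_le hx.1 with h' | h'
      · rw [← h']
        exact ((mem_Tset hp hrK hsupp hm hK i).1 hi)
      · have hlt : x - 1 < α := by omega
        have := Nat.find_min hex hlt
        intro hex0
        exact this ⟨by omega, by
          have : x - 1 + 1 = x := by omega
          rw [this]; exact hex0⟩
    have hαT : α ∈ TopSet p K c := by
      rw [TopSet, mem_filter]
      exact ⟨hIcc (Finset.mem_Icc.2 ⟨hspec.1, le_rfl⟩), hspec.2⟩
    apply Finset.mem_biUnion.2 ⟨α, hαT, ?_⟩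
    rw [← runfilter_eq α, mem_filter]
    exact ⟨hi, hspec.1, hIcc⟩
  · intro i hi
    obtain ⟨t, _, hit⟩ := Finset.mem_biUnion.1 hi
    rw [← runfilter_eq t] at hit
    exact (mem_filter.1 hit).1

lemma runs_disjoint {p K : ℕ} {c : ℕ → ℕ} :
    ∀ t ∈ TopSet p K c, ∀ t' ∈ TopSet p K c, t ≠ t' →
      Disjoint (Finset.Icc (t + 1 - ff p K c t) t) (Finset.Icc (t' + 1 - ff p K c t') t') := by
  classical
  have haux : ∀ t t', t ∈ TopSet p K c → t' ∈ TopSet p K c → t < t' →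
      ∀ x, x ∈ Finset.Icc (t + 1 - ff p K c t) t → x ∉ Finset.Icc (t' + 1 - ff p K c t') t' := by
    intro t t' ht ht' hlt x hx hx'
    rw [← runfilter_eq] at hx hx'
    have h1 := (mem_filter.1 hx).2.1
    have h2 := (mem_filter.1 hx').2.2
    have htt : t + 1 ∈ Finset.Icc x t' := Finset.mem_Icc.2 ⟨by omega, by omega⟩
    have hmem := h2 htt
    have := (mem_filter.1 ht).2
    rw [Tset, mem_filter] at hmem
    exact hmem.2 this
  intro t ht t' ht' hne
  rw [Finset.disjoint_left]
  intro x hx hx'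
  rcases lt_or_gt_of_ne hne with h | h
  · exact haux t t' ht ht' h x hx hx'
  · exact haux t' t ht' ht h x hx' hx

lemma sum_ff {p m K r : ℕ} {c : ℕ → ℕ} (hp : 2 ≤ p) (hrK : r + 1 ≤ K)
    (hsupp : ∀ i, r + 1 ≤ i → c i = 0) (hm : m = ∑ i ∈ range K, c i * p ^ i)
    (hK : m < p ^ K) :
    ∑ t ∈ TopSet p K c, ff p K c t = (Tset p K c).card := by
  classical
  rw [cover_T hp hrK hsupp hm hK, Finset.card_biUnion runs_disjoint]
  apply Finset.sum_congr rfl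
  intro t _
  rw [← runfilter_eq t, ff]

lemma card_le_sum' (S : Finset ℕ) (f : ℕ → ℕ) (h : ∀ i ∈ S, 1 ≤ f i) :
    S.card ≤ ∑ i ∈ S, f i := by
  calc S.card = ∑ _i ∈ S, 1 := (Finset.card_eq_sum_ones S)
  _ ≤ ∑ i ∈ S, f i := Finset.sum_le_sum h
def rnk (u : Finset ℕ) (t : ℕ) : ℕ := (u.filter (· < t)).card

def pff (p K : ℕ) (c : ℕ → ℕ) (t : ℕ) : ℕ :=
  ∑ x ∈ (TopSet p K c).filter (· ≤ t), ff p K c x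

def pee (p K : ℕ) (c : ℕ → ℕ) (i : ℕ) : ℕ :=
  ∑ x ∈ (Tset p K c).filter (· ≤ i), ef p c x

def Cset (K : ℕ) (c : ℕ → ℕ) : Finset ℕ := (range K).filter (fun i => c i ≠ 0)

def encU (p m K : ℕ) (c : ℕ → ℕ) : Finset ℕ := (TopSet p K c).image (rnk (DFset p m K))

def encW (p K : ℕ) (c : ℕ → ℕ) : Finset ℕ :=
  (TopSet p K c).image (fun t => pff p K c t - 1)

def encV (p K : ℕ) (c : ℕ → ℕ) : Finset ℕ :=
  (Tset p K c).image (fun i => pee p K c i - 1)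

def encB (K : ℕ) (c b : ℕ → ℕ) : Finset ℕ :=
  ((range K).filter (fun i => b i = 1)).image (rnk (Cset K c))

lemma rnk_inj (u : Finset ℕ) : ∀ a ∈ u, ∀ b ∈ u, rnk u a = rnk u b → a = b := by
  intro a ha b hb hab
  rcases lt_trichotomy a b with h | h | h
  · have := rank_strictMono u a ha b hb h
    rw [rnk, rnk] at hab
    omega
  · exact h
  · have := rank_strictMono u b hb a ha h
    rw [rnk, rnk] at hab
    omega

lemma Top_subset_DF {p m K r : ℕ} {c : ℕ → ℕ} (hp : 2 ≤ p) (hrK : r + 1 ≤ K)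
    (hsupp : ∀ i, r + 1 ≤ i → c i = 0) (hm : m = ∑ i ∈ range K, c i * p ^ i)
    (hK : m < p ^ K) : TopSet p K c ⊆ DFset p m K := by
  intro t ht
  have h1 := mem_filter.1 ht
  have h2 : ef p c t ≠ 0 := (mem_Tset hp hrK hsupp hm hK t).1 h1.1
  have h3 := h1.2
  have hk := key_id hp hrK hsupp hm t
  rw [h3] at hk
  rw [mem_DFset hp hK]
  omega

lemma ff_pos {p K : ℕ} {c : ℕ → ℕ} : ∀ t ∈ TopSet p K c, 1 ≤ ff p K c t := by
  intro t ht
  have htT : t ∈ Tset p K c := (mem_filter.1 ht).1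
  have : t ∈ (Tset p K c).filter (fun i => i ≤ t ∧ Finset.Icc i t ⊆ Tset p K c) := by
    rw [mem_filter]
    exact ⟨htT, le_rfl, by rw [Finset.Icc_self]; simpa using htT⟩
  rw [ff]
  exact Finset.card_pos.2 ⟨t, this⟩

lemma e_pos_onT {p K : ℕ} {c : ℕ → ℕ} : ∀ i ∈ Tset p K c, 1 ≤ ef p c i := by
  intro i hi
  have := (mem_filter.1 hi).2
  omega

lemma prefix_strictMono (S : Finset ℕ) (f : ℕ → ℕ) (hf : ∀ x ∈ S, 1 ≤ f x) :
    ∀ a ∈ S, ∀ b ∈ S, a < b →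
      ∑ x ∈ S.filter (· ≤ a), f x < ∑ x ∈ S.filter (· ≤ b), f x := by
  intro a ha b hb hab
  have hsub : S.filter (· ≤ a) ⊆ S.filter (· ≤ b) := by
    intro x hx
    have := mem_filter.1 hx
    exact mem_filter.2 ⟨this.1, by omega⟩
  have hbmem : b ∈ S.filter (· ≤ b) := mem_filter.2 ⟨hb, le_rfl⟩
  have hbnot : b ∉ S.filter (· ≤ a) := by
    simp only [mem_filter]
    rintro ⟨-, h⟩
    omega
  exact Finset.sum_lt_sum_of_subset hsub hbmem hbnot (hf b hb) (fun x _ _ => Nat.zero_le _)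

lemma prefix_pos (S : Finset ℕ) (f : ℕ → ℕ) (hf : ∀ x ∈ S, 1 ≤ f x) :
    ∀ a ∈ S, 1 ≤ ∑ x ∈ S.filter (· ≤ a), f x := by
  intro a ha
  calc 1 ≤ f a := hf a ha
  _ ≤ ∑ x ∈ S.filter (· ≤ a), f x :=
      Finset.single_le_sum (fun x _ => Nat.zero_le _) (mem_filter.2 ⟨ha, le_rfl⟩)

lemma prefix_le_total (S : Finset ℕ) (f : ℕ → ℕ) :
    ∀ a, ∑ x ∈ S.filter (· ≤ a), f x ≤ ∑ x ∈ S, f x := by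
  intro a
  apply Finset.sum_le_sum_of_subset (Finset.filter_subset _ _)

/-- Main representation-level recovery: the encodings determine `c`. -/
lemma rep_recover {p m n K r : ℕ} {c c' : ℕ → ℕ} (hp : 2 ≤ p) (hrK : r + 1 ≤ K)
    (hsupp : ∀ i, r + 1 ≤ i → c i = 0) (hm : m = ∑ i ∈ range K, c i * p ^ i)
    (hn : ∑ i ∈ range K, c i ≤ n) (hK : m < p ^ K)
    (hsupp' : ∀ i, r + 1 ≤ i → c' i = 0) (hm' : m = ∑ i ∈ range K, c' i * p ^ i)
    (hn' : ∑ i ∈ range K, c' i ≤ n)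
    (hU : encU p m K c = encU p m K c') (hW : encW p K c = encW p K c')
    (hV : encV p K c = encV p K c') : c = c' := by
  classical
  -- step 1 : the top sets agree
  have hTop : TopSet p K c = TopSet p K c' := by
    apply image_injOn_eq _ _ (DFset p m K) (rnk (DFset p m K))
      (Top_subset_DF hp hrK hsupp hm hK) (Top_subset_DF hp hrK hsupp' hm' hK)
      (rnk_inj _) hU
  -- step 2 : the run lengths agree on the top set
  have hpff : ∀ t ∈ TopSet p K c, pff p K c t = pff p K c' t := by
    have hsm := sm_eq (TopSet p K c) (fun t => pff p K c t - 1) (fun t => pff p K c' t - 1)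
      (by
        intro a ha b hb hab
        have h1 := prefix_strictMono (TopSet p K c) (ff p K c) ff_pos a ha b hb hab
        have h2 := prefix_pos (TopSet p K c) (ff p K c) ff_pos a ha
        simp only [pff]
        omega)
      (by
        intro a ha b hb hab
        rw [hTop] at ha hb
        have h1 := prefix_strictMono (TopSet p K c') (ff p K c') ff_pos a ha b hb hab
        have h2 := prefix_pos (TopSet p K c') (ff p K c') ff_pos a ha
        simp only [pff]
        omega)
      (by rw [encW, encW, ← hTop] at hW; exact hW)
    intro t ht
    have h1 := hsm t ht
    have h2 := prefix_pos (TopSet p K c) (ff p K c) ff_pos t ht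
    have h3 := prefix_pos (TopSet p K c') (ff p K c') ff_pos t (hTop ▸ ht)
    simp only [pff] at *
    omega
  have hff : ∀ t ∈ TopSet p K c, ff p K c t = ff p K c' t := by
    apply ps_eq
    intro t ht
    have h1 := hpff t ht
    simp only [pff, ← hTop] at h1
    exact h1
  -- step 3 : the supports agree
  have hT : Tset p K c = Tset p K c' := by
    rw [cover_T hp hrK hsupp hm hK, cover_T hp hrK hsupp' hm' hK, ← hTop]
    apply Finset.biUnion_congr rfl
    intro t ht
    rw [hff t ht]
  -- step 4 : the carries agree
  have hpee : ∀ i ∈ Tset p K c, pee p K c i = pee p K c' i := by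
    have hsm := sm_eq (Tset p K c) (fun i => pee p K c i - 1) (fun i => pee p K c' i - 1)
      (by
        intro a ha b hb hab
        have h1 := prefix_strictMono (Tset p K c) (ef p c) e_pos_onT a ha b hb hab
        have h2 := prefix_pos (Tset p K c) (ef p c) e_pos_onT a ha
        simp only [pee]
        omega)
      (by
        intro a ha b hb hab
        rw [hT] at ha hb
        have h1 := prefix_strictMono (Tset p K c') (ef p c') e_pos_onT a ha b hb hab
        have h2 := prefix_pos (Tset p K c') (ef p c') e_pos_onT a ha
        simp only [pee]
        omega)
      (by rw [encV, encV, ← hT] at hV; exact hV)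
    intro i hi
    have h1 := hsm i hi
    have h2 := prefix_pos (Tset p K c) (ef p c) e_pos_onT i hi
    have h3 := prefix_pos (Tset p K c') (ef p c') e_pos_onT i (hT ▸ hi)
    simp only [pee] at *
    omega
  have heT : ∀ i ∈ Tset p K c, ef p c i = ef p c' i := by
    apply ps_eq
    intro i hi
    have h1 := hpee i hi
    simp only [pee, ← hT] at h1
    exact h1
  have he : ∀ i, ef p c i = ef p c' i := by
    intro i
    by_cases hi : i ∈ Tset p K c
    · exact heT i hi
    · have h1 : ef p c i = 0 := by
        by_contra h
        exact hi ((mem_Tset hp hrK hsupp hm hK i).2 h)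
      have h2 : ef p c' i = 0 := by
        by_contra h
        exact hi (hT ▸ ((mem_Tset hp hrK hsupp' hm' hK i).2 h))
      rw [h1, h2]
  -- step 5 : conclude
  funext i
  have k1 := key_id hp hrK hsupp hm i
  have k2 := key_id hp hrK hsupp' hm' i
  have e1 := he i
  have e2 := he (i + 1)
  rw [← e1, ← e2] at k2
  omega
lemma cf_zero (ab : (ℕ → ℕ) × (ℕ → ℕ)) : cf ab 0 = ab.2 0 := by simp [cf]

lemma cf_succ (ab : (ℕ → ℕ) × (ℕ → ℕ)) (i : ℕ) : cf ab (i + 1) = ab.1 i + ab.2 (i + 1) := by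
  simp [cf]

section Sol

variable {p r m n : ℕ} {ab : (ℕ → ℕ) × (ℕ → ℕ)}

lemma sol_csupp (hab : ab ∈ SolSet p r m n) : ∀ i, r + 1 ≤ i → cf ab i = 0 := by
  intro i hi
  obtain ⟨ha, hb, _, _, _⟩ := hab
  match i, hi with
  | (j + 1), hi =>
    rw [cf_succ, ha j (by omega), hb (j + 1) (by omega)]

lemma sol_sum_eq (hab : ab ∈ SolSet p r m n) (f : ℕ → ℕ) (K : ℕ) (hK : r + 1 ≤ K) :
    ∑ i ∈ range K, cf ab i * f i
      = ab.2 0 * f 0 + ∑ i ∈ range r, (ab.1 i + ab.2 (i + 1)) * f (i + 1) := by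
  have h1 : ∑ i ∈ range K, cf ab i * f i = ∑ i ∈ range (r + 1), cf ab i * f i := by
    symm
    apply Finset.sum_subset (range_subset_range.2 hK)
    intro x _ hx
    rw [mem_range, Nat.not_lt] at hx
    rw [sol_csupp hab x hx]
    ring
  have h2 : ∀ i ∈ range r, cf ab (i + 1) * f (i + 1) = (ab.1 i + ab.2 (i + 1)) * f (i + 1) := by
    intro i _
    rw [cf_succ]
  rw [h1, Finset.sum_range_succ' (fun i => cf ab i * f i) r, cf_zero,
    Finset.sum_congr rfl h2, add_comm]

lemma sol_cm (hab : ab ∈ SolSet p r m n) (K : ℕ) (hK : r + 1 ≤ K) :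
    m = ∑ i ∈ range K, cf ab i * p ^ i := by
  have h := sol_sum_eq hab (fun i => p ^ i) K hK
  obtain ⟨_, _, _, _, hm⟩ := hab
  rw [h, pow_zero, mul_one, ← hm]

lemma sol_csum (hab : ab ∈ SolSet p r m n) (K : ℕ) (hK : r + 1 ≤ K) :
    ∑ i ∈ range K, cf ab i ≤ n := by
  have h := sol_sum_eq hab (fun _ => 1) K hK
  simp only [mul_one] at h
  obtain ⟨_, hb, _, hn, _⟩ := hab
  have hsplit : ∑ i ∈ range r, (ab.1 i + ab.2 (i + 1))
      = ∑ i ∈ range r, ab.1 i + ∑ i ∈ range r, ab.2 (i + 1) := Finset.sum_add_distrib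
  have hbshift : ab.2 0 + ∑ i ∈ range r, ab.2 (i + 1) = ∑ i ∈ range r, ab.2 i := by
    have h1 : ∑ i ∈ range (r + 1), ab.2 i = ∑ i ∈ range r, ab.2 (i + 1) + ab.2 0 :=
      Finset.sum_range_succ' _ _
    have h2 : ∑ i ∈ range (r + 1), ab.2 i = ∑ i ∈ range r, ab.2 i + ab.2 r :=
      Finset.sum_range_succ _ _
    rw [hb r le_rfl] at h2
    omega
  omega

lemma sol_mlt (hab : ab ∈ SolSet p r m n) (hp : 2 ≤ p) (hn : 1 ≤ n) :
    m < p ^ (r + n) := by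
  have hm := sol_cm hab (r + 1) le_rfl
  have hsum := sol_csum hab (r + 1) le_rfl
  have h1 : m ≤ (∑ i ∈ range (r + 1), cf ab i) * p ^ r := by
    rw [hm, Finset.sum_mul]
    apply Finset.sum_le_sum
    intro i hi
    exact Nat.mul_le_mul_left _ (pow_le_pow_right₀ (by omega) (by
      rw [mem_range] at hi; omega))
  have h2 : (∑ i ∈ range (r + 1), cf ab i) * p ^ r ≤ n * p ^ r :=
    Nat.mul_le_mul_right _ hsum
  have h3 : n < p ^ n := by
    calc n < 2 ^ n := Nat.lt_two_pow_self
    _ ≤ p ^ n := Nat.pow_le_pow_left hp n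
  calc m ≤ n * p ^ r := le_trans h1 h2
  _ < p ^ n * p ^ r := by
      exact (Nat.mul_lt_mul_right (pow_pos (show 0 < p by omega) r)).2 h3
  _ = p ^ (r + n) := by rw [← pow_add, add_comm]

lemma sol_bsupp (hab : ab ∈ SolSet p r m n) (K : ℕ) (hK : r + 1 ≤ K) :
    (range K).filter (fun i => ab.2 i = 1) ⊆ Cset K (cf ab) := by
  intro i hi
  have h1 := mem_filter.1 hi
  rw [Cset, mem_filter]
  refine ⟨h1.1, ?_⟩
  match i with
  | 0 => rw [cf_zero]; omega
  | (j + 1) => rw [cf_succ]; omega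

/-- The full encoding of a solution. -/
def Enc (p r n : ℕ) (ab : (ℕ → ℕ) × (ℕ → ℕ)) :
    Finset ℕ × Finset ℕ × Finset ℕ × Finset ℕ :=
  (encU p (ab.2 0 + ∑ i ∈ Finset.range r, (ab.1 i + ab.2 (i + 1)) * p ^ (i + 1)) (r + n) (cf ab),
   encW p (r + n) (cf ab),
   encV p (r + n) (cf ab),
   encB (r + n) (cf ab) ab.2)

lemma enc_injOn (hp : 2 ≤ p) (hn : 1 ≤ n) (hr : 1 ≤ r) :
    Set.InjOn (Enc p r n) (SolSet p r m n) := by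
  intro x hx y hy hxy
  have hrK : r + 1 ≤ r + n := by omega
  simp only [Enc, Prod.mk.injEq] at hxy
  obtain ⟨hU, hW, hV, hB⟩ := hxy
  have hmx : x.2 0 + ∑ i ∈ Finset.range r, (x.1 i + x.2 (i + 1)) * p ^ (i + 1) = m :=
    hx.2.2.2.2
  have hmy : y.2 0 + ∑ i ∈ Finset.range r, (y.1 i + y.2 (i + 1)) * p ^ (i + 1) = m :=
    hy.2.2.2.2
  rw [hmx, hmy] at hU
  have hc : cf x = cf y :=
    rep_recover hp hrK (sol_csupp hx) (sol_cm hx _ hrK) (sol_csum hx _ hrK)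
      (sol_mlt hx hp hn) (sol_csupp hy) (sol_cm hy _ hrK) (sol_csum hy _ hrK)
      hU hW hV
  have hCs : Cset (r + n) (cf x) = Cset (r + n) (cf y) := by rw [hc]
  have hbsupp : (range (r + n)).filter (fun i => x.2 i = 1)
      = (range (r + n)).filter (fun i => y.2 i = 1) := by
    apply image_injOn_eq _ _ (Cset (r + n) (cf x)) (rnk (Cset (r + n) (cf x)))
      (sol_bsupp hx _ hrK) (hCs ▸ sol_bsupp hy _ hrK) (rnk_inj _)
    rw [encB, encB, ← hCs] at hB
    exact hB
  have hb : x.2 = y.2 := by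
    funext i
    by_cases hir : i < r
    · have hiff := Finset.ext_iff.1 hbsupp i
      simp only [mem_filter, mem_range] at hiff
      have h2 : i < r + n := by omega
      have hx1 := hx.2.2.1 i
      have hy1 := hy.2.2.1 i
      have h3 : x.2 i = 1 ↔ y.2 i = 1 := by
        constructor
        · intro h
          exact (hiff.1 ⟨h2, h⟩).2
        · intro h
          exact (hiff.2 ⟨h2, h⟩).2
      omega
    · rw [hx.2.1 i (by omega), hy.2.1 i (by omega)]
  have ha : x.1 = y.1 := by
    funext i
    by_cases hir : i < r
    · have h1 := congrFun hc (i + 1)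
      rw [cf_succ, cf_succ] at h1
      have h2 := congrFun hb (i + 1)
      omega
    · rw [hx.1 i (by omega), hy.1 i (by omega)]
  exact Prod.ext ha hb

end Sol
section Bounds

variable {p r m n : ℕ} {ab : (ℕ → ℕ) × (ℕ → ℕ)}

lemma rnk_lt_card (u : Finset ℕ) : ∀ t ∈ u, rnk u t < u.card := by
  intro t ht
  apply Finset.card_lt_card
  constructor
  · exact Finset.filter_subset _ _
  · intro h
    have := mem_filter.1 (h ht)
    omega

lemma enc_mem (hp : 2 ≤ p) (hn : 1 ≤ n) (hr : 1 ≤ r) (hab : ab ∈ SolSet p r m n) :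
    Enc p r n ab ∈ ((range n).powerset ×ˢ ((range n).powerset ×ˢ
      ((range n).powerset ×ˢ (range n).powerset)) :
      Finset (Finset ℕ × (Finset ℕ × (Finset ℕ × Finset ℕ)))) := by
  classical
  have hrK : r + 1 ≤ r + n := by omega
  set K := r + n with hKdef
  have hmab : ab.2 0 + ∑ i ∈ Finset.range r, (ab.1 i + ab.2 (i + 1)) * p ^ (i + 1) = m :=
    hab.2.2.2.2
  have hsupp := sol_csupp hab
  have hm := sol_cm hab K hrK
  have hcsum := sol_csum hab K hrK
  have hK := sol_mlt hab hp hn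
  have hsums := sums_le hp hrK hsupp hm hcsum hK
  -- basic cardinalities
  have hcardDF : (DFset p m K).card ≤ n := by
    apply le_trans (card_le_sum' (DFset p m K) (df p m) ?_)
    · apply le_trans (Finset.sum_le_sum_of_subset (Finset.filter_subset _ _)) hsums.1
    · intro i hi
      have := (mem_filter.1 hi).2
      omega
  have hcardT : (Tset p K (cf ab)).card ≤ n := by
    apply le_trans (card_le_sum' (Tset p K (cf ab)) (ef p (cf ab)) e_pos_onT)
    apply le_trans (Finset.sum_le_sum_of_subset (Finset.filter_subset _ _)) hsums.2
  have hcardCs : (Cset K (cf ab)).card ≤ n := by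
    apply le_trans (card_le_sum' (Cset K (cf ab)) (cf ab) ?_)
    · apply le_trans (Finset.sum_le_sum_of_subset (Finset.filter_subset _ _)) hcsum
    · intro i hi
      have := (mem_filter.1 hi).2
      omega
  -- the four subset facts
  have hsubU : encU p m K (cf ab) ⊆ range n := by
    intro z hz
    obtain ⟨t, ht, rfl⟩ := mem_image.1 hz
    have htDF := Top_subset_DF hp hrK hsupp hm hK ht
    have := rnk_lt_card (DFset p m K) t htDF
    rw [mem_range]
    omega
  have hsubW : encW p K (cf ab) ⊆ range n := by
    intro z hz
    obtain ⟨t, ht, rfl⟩ := mem_image.1 hz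
    have h1 := prefix_pos (TopSet p K (cf ab)) (ff p K (cf ab)) ff_pos t ht
    have h2 : pff p K (cf ab) t ≤ (Tset p K (cf ab)).card := by
      rw [← sum_ff hp hrK hsupp hm hK]
      exact prefix_le_total _ _ t
    rw [mem_range, pff] at *
    omega
  have hsubV : encV p K (cf ab) ⊆ range n := by
    intro z hz
    obtain ⟨i, hi, rfl⟩ := mem_image.1 hz
    have h1 := prefix_pos (Tset p K (cf ab)) (ef p (cf ab)) e_pos_onT i hi
    have h2 : pee p K (cf ab) i ≤ n := by
      apply le_trans (prefix_le_total _ _ i)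
      apply le_trans (Finset.sum_le_sum_of_subset (Finset.filter_subset _ _)) hsums.2
    rw [mem_range, pee] at *
    omega
  have hsubB : encB K (cf ab) ab.2 ⊆ range n := by
    intro z hz
    obtain ⟨i, hi, rfl⟩ := mem_image.1 hz
    have hiCs := sol_bsupp hab K hrK hi
    have := rnk_lt_card (Cset K (cf ab)) i hiCs
    rw [mem_range]
    omega
  rw [Finset.mem_product, Finset.mem_product, Finset.mem_product]
  refine ⟨?_, ?_, ?_, ?_⟩ <;> rw [Finset.mem_powerset]
  · rw [Enc]
    simp only [hmab]
    exact hsubU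
  · exact hsubW
  · exact hsubV
  · exact hsubB

lemma ncard_bound (hp : 2 ≤ p) (hn : 1 ≤ n) (hr : 1 ≤ r) :
    Ncard p r m n ≤ 2 ^ n * (2 ^ n * (2 ^ n * 2 ^ n)) := by
  classical
  set P : Finset (Finset ℕ × (Finset ℕ × (Finset ℕ × Finset ℕ))) :=
    (range n).powerset ×ˢ ((range n).powerset ×ˢ ((range n).powerset ×ˢ (range n).powerset))
    with hP
  have himg : Enc p r n '' (SolSet p r m n) ⊆ ↑P := by
    rintro z ⟨ab, hab, rfl⟩
    exact enc_mem hp hn hr hab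
  calc Ncard p r m n = (SolSet p r m n).ncard := Nat.card_coe_set_eq _
  _ = (Enc p r n '' SolSet p r m n).ncard :=
      (Set.ncard_image_of_injOn (enc_injOn hp hn hr)).symm
  _ ≤ (↑P : Set (Finset ℕ × (Finset ℕ × (Finset ℕ × Finset ℕ)))).ncard :=
      Set.ncard_le_ncard himg P.finite_toSet
  _ = P.card := Set.ncard_coe_finset P
  _ = 2 ^ n * (2 ^ n * (2 ^ n * 2 ^ n)) := by
      rw [hP]
      simp [Finset.card_product, Finset.card_powerset, Finset.card_range]

end Bounds
theorem stmt14' (p : ℕ) (hp : p.Prime) (n : ℕ) (hn : 1 ≤ n) :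
    (∀ m r : ℕ, 1 ≤ r →
      (Ncard p r m n : ℝ) ≤ n * 4 ^ n * Real.exp (2 * Real.pi * n / Real.sqrt 3)) ∧
    (∀ m : ℕ,
      (Nstab p (m : ℤ) (n : ℤ) : ℝ) ≤ n * 4 ^ n * Real.exp (2 * Real.pi * n / Real.sqrt 3)) := by
  have hp2 : 2 ≤ p := hp.two_le
  have hmain : ∀ m r : ℕ, 1 ≤ r →
      (Ncard p r m n : ℝ) ≤ n * 4 ^ n * Real.exp (2 * Real.pi * n / Real.sqrt 3) := by
    intro m r hr
    have h1 : (Ncard p r m n : ℝ) ≤ ((2:ℝ) ^ n * (2 ^ n * (2 ^ n * 2 ^ n))) := by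
      have h0 := ncard_bound (p := p) (r := r) (m := m) (n := n) hp2 hn hr
      calc (Ncard p r m n : ℝ) ≤ ((2 ^ n * (2 ^ n * (2 ^ n * 2 ^ n)) : ℕ) : ℝ) :=
            Nat.cast_le.2 h0
      _ = _ := by push_cast; ring
    have hsqrt3 : (0:ℝ) < Real.sqrt 3 := Real.sqrt_pos.2 (by norm_num)
    have hsqrt3' : Real.sqrt 3 ≤ 2 := by
      nlinarith [Real.sq_sqrt (show (0:ℝ) ≤ 3 by norm_num), Real.sqrt_nonneg 3]
    have hpi := Real.pi_gt_three
    have hc : (3:ℝ) ≤ 2 * Real.pi / Real.sqrt 3 := by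
      rw [le_div_iff₀ hsqrt3]
      nlinarith
    have h4 : (4:ℝ) ≤ Real.exp (2 * Real.pi / Real.sqrt 3) := by
      have := Real.add_one_le_exp (2 * Real.pi / Real.sqrt 3)
      nlinarith
    have hexp : (4:ℝ) ^ n ≤ Real.exp (2 * Real.pi * n / Real.sqrt 3) := by
      have h5 : 2 * Real.pi * n / Real.sqrt 3 = n * (2 * Real.pi / Real.sqrt 3) := by ring
      rw [h5, Real.exp_nat_mul]
      exact pow_le_pow_left₀ (by norm_num) h4 n
    have h2 : ((2:ℝ) ^ n * (2 ^ n * (2 ^ n * 2 ^ n))) = 4 ^ n * 4 ^ n := by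
      rw [show (4:ℝ) = 2 * 2 by norm_num, mul_pow]
      ring
    have hn' : (1:ℝ) ≤ n := by exact_mod_cast hn
    have h4pos : (0:ℝ) < 4 ^ n := by positivity
    have hep : (0:ℝ) < Real.exp (2 * Real.pi * n / Real.sqrt 3) := Real.exp_pos _
    calc (Ncard p r m n : ℝ) ≤ 4 ^ n * 4 ^ n := by rw [← h2]; exact h1
    _ ≤ 4 ^ n * Real.exp (2 * Real.pi * n / Real.sqrt 3) :=
        mul_le_mul_of_nonneg_left hexp (le_of_lt h4pos)
    _ ≤ n * (4 ^ n * Real.exp (2 * Real.pi * n / Real.sqrt 3)) :=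
        le_mul_of_one_le_left (by positivity) hn'
    _ = n * 4 ^ n * Real.exp (2 * Real.pi * n / Real.sqrt 3) := by ring
  constructor
  · exact hmain
  · intro m
    have heq : Nstab p (m : ℤ) (n : ℤ) = Ncard p (m + 1) m n := by
      rw [Nstab, if_pos ⟨Int.natCast_nonneg m, Int.natCast_nonneg n⟩]
      simp
    rw [heq]
    exact hmain m (m + 1) (by omega)

end Stmt14X

/-- for a prime `p`, `n ≥ 1`, `m ≥ 0` and `r ≥ 1`,
`N_r(m,n) ≤ n · 4^n · e^{2πn/√3}`; in particular the stable value `N(m,n)`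
satisfies the same bound. -/
theorem stmt14 (p : ℕ) (hp : p.Prime) (n : ℕ) (hn : 1 ≤ n) :
    (∀ m r : ℕ, 1 ≤ r →
      (Ncard p r m n : ℝ) ≤ n * 4 ^ n * Real.exp (2 * Real.pi * n / Real.sqrt 3)) ∧
    (∀ m : ℕ,
      (Nstab p (m : ℤ) (n : ℤ) : ℝ) ≤ n * 4 ^ n * Real.exp (2 * Real.pi * n / Real.sqrt 3)) := by
  exact Stmt14X.stmt14' p hp n hn
end

section
/- Let p be an odd prime. For all integers n ≥ 0 and m ≥ 0 there exists an integer m' ≥ 0 such that N(m,n) ≤ N(m', n+1). Consequently, the sequence (max_{m∈ℕ} N(m,n))_{n≥0} is nondecreasing in n. -/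
/-- Every solution set is finite. -/
lemma solset_finite (p r m n : ℕ) : Finite (SolSet p r m n) := by
  have hb : ∀ x : SolSet p r m n, ∀ i, x.1.1 i ≤ n := by
    rintro ⟨⟨a, b⟩, ha, hb', hb1, hn, hm⟩ i
    dsimp only at ha hb' hb1 hn hm ⊢
    by_cases hi : i < r
    · have := Finset.single_le_sum (f := a) (fun j _ => Nat.zero_le _)
        (Finset.mem_range.mpr hi)
      omega
    · rw [ha i (by omega)]; exact Nat.zero_le _
  have hb2 : ∀ x : SolSet p r m n, ∀ i, x.1.2 i ≤ 1 := fun x i => x.2.2.2.1 i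
  apply Finite.of_injective (f := fun x : SolSet p r m n =>
    ((fun i : Fin r => (⟨x.1.1 i, Nat.lt_succ_of_le (hb x i)⟩ : Fin (n + 1))),
     (fun i : Fin r => (⟨x.1.2 i, Nat.lt_succ_of_le (hb2 x i)⟩ : Fin 2))))
  rintro ⟨⟨a, b⟩, hx⟩ ⟨⟨a', b'⟩, hy⟩ h
  simp only [Prod.mk.injEq, funext_iff, Fin.mk.injEq, Fin.forall_iff] at h
  obtain ⟨h1, h2⟩ := h
  apply Subtype.ext
  refine Prod.ext (funext fun i => ?_) (funext fun i => ?_)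
  · by_cases hi : i < r
    · exact h1 i hi
    · rw [hx.1 i (by omega), hy.1 i (by omega)]
  · by_cases hi : i < r
    · exact h2 i hi
    · rw [hx.2.1 i (by omega), hy.2.1 i (by omega)]

/-- The shift map: prepend `a₁' = 0`, `b₁' = 1`. -/
def shiftMap (ab : (ℕ → ℕ) × (ℕ → ℕ)) : (ℕ → ℕ) × (ℕ → ℕ) :=
  ((fun i => if i = 0 then 0 else ab.1 (i - 1)),
   (fun i => if i = 0 then 1 else ab.2 (i - 1)))

lemma shiftMap_injective : Function.Injective shiftMap := by
  intro x y h
  have h1 := congrArg Prod.fst h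
  have h2 := congrArg Prod.snd h
  refine Prod.ext (funext fun i => ?_) (funext fun i => ?_)
  · have := congrFun h1 (i + 1); simpa [shiftMap] using this
  · have := congrFun h2 (i + 1); simpa [shiftMap] using this

lemma shiftMap_mem (p m n : ℕ) (hp : 2 ≤ p) (ab : (ℕ → ℕ) × (ℕ → ℕ))
    (h : ab ∈ SolSet p (m + 1) m n) :
    shiftMap ab ∈ SolSet p (p * m + 2) (p * m + 1) (n + 1) := by
  obtain ⟨a, b⟩ := ab
  obtain ⟨ha, hb, hb1, hn, hm⟩ := h
  dsimp only at ha hb hb1 hn hm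
  have hpm : m ≤ p * m := Nat.le_mul_of_pos_left m (by omega)
  refine ⟨?_, ?_, ?_, ?_, ?_⟩
  · intro i hi
    simp only [shiftMap]
    rw [if_neg (by omega), ha (i - 1) (by omega)]
  · intro i hi
    simp only [shiftMap]
    rw [if_neg (by omega), hb (i - 1) (by omega)]
  · intro i
    simp only [shiftMap]
    split
    · exact le_refl 1
    · exact hb1 _
  · -- the n-equation
    simp only [shiftMap]
    rw [Finset.sum_range_succ' (fun i => if i = 0 then 0 else a (i - 1)),
        Finset.sum_range_succ' (fun i => if i = 0 then 1 else b (i - 1))]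
    simp only [Nat.add_sub_cancel, Nat.succ_ne_zero, if_false, if_pos rfl, reduceIte]
    have ea : ∑ i ∈ Finset.range (p * m + 1), a i = ∑ i ∈ Finset.range (m + 1), a i := by
      refine (Finset.sum_subset (Finset.range_subset_range.mpr (by omega)) ?_).symm
      intro i _ hi
      exact ha i (by simp at hi ⊢; omega)
    have eb : ∑ i ∈ Finset.range (p * m + 1), b i = ∑ i ∈ Finset.range (m + 1), b i := by
      refine (Finset.sum_subset (Finset.range_subset_range.mpr (by omega)) ?_).symm
      intro i _ hi
      exact hb i (by simp at hi ⊢; omega)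
    rw [ea, eb]
    omega
  · -- the m-equation
    simp only [shiftMap]
    rw [Finset.sum_range_succ'
      (fun i => ((if i = 0 then 0 else a (i - 1)) +
        (if i + 1 = 0 then 1 else b (i + 1 - 1))) * p ^ (i + 1))]
    simp only [Nat.add_sub_cancel, Nat.succ_ne_zero, if_false, if_pos rfl, reduceIte,
      Nat.add_eq_zero, and_false, one_ne_zero]
    have key : ∑ i ∈ Finset.range (p * m + 1), (a i + b (i + 1)) * p ^ (i + 1 + 1)
        = p * ∑ i ∈ Finset.range (m + 1), (a i + b (i + 1)) * p ^ (i + 1) := by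
      rw [Finset.mul_sum]
      refine (Finset.sum_subset (Finset.range_subset_range.mpr (by omega)) ?_).symm.trans
        (Finset.sum_congr rfl fun i _ => by ring)
      intro i _ hi
      simp only [Finset.mem_range, not_lt] at hi
      rw [ha i (by omega), hb (i + 1) (by omega)]
      simp
    rw [key]
    set S := ∑ i ∈ Finset.range (m + 1), (a i + b (i + 1)) * p ^ (i + 1) with hS
    rw [← hm]
    ring
  
/-- for an odd prime `p`, every value `N(m,n)` is dominated by some
value `N(m', n+1)`; hence the sequence of maxima `(max_m N(m,n))_n` is nondecreasing. -/
theorem stmt15 (p : ℕ) (hp : p.Prime) (hodd : Odd p) (n m : ℕ) :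
    ∃ m' : ℕ, Nstab p (m : ℤ) (n : ℤ) ≤ Nstab p (m' : ℤ) ((n : ℤ) + 1) := by
  refine ⟨p * m + 1, ?_⟩
  have h1 : ((n : ℤ) + 1) = ((n + 1 : ℕ) : ℤ) := by push_cast; ring
  rw [h1]
  simp only [Nstab, Int.toNat_natCast, Int.natCast_nonneg, and_self, if_true]
  have hp2 : 2 ≤ p := hp.two_le
  haveI := solset_finite p (p * m + 2) (p * m + 1) (n + 1)
  have : p * m + 1 + 1 = p * m + 2 := rfl
  rw [this]
  exact Nat.card_le_card_of_injective
    (fun x : SolSet p (m + 1) m n =>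
      (⟨shiftMap x.1, shiftMap_mem p m n hp2 x.1 x.2⟩ : SolSet p (p * m + 2) (p * m + 1) (n + 1)))
    (fun x y h => Subtype.ext (shiftMap_injective (congrArg Subtype.val h)))
end

section
/- For all integers n ≥ 1 and m ≥ 0, the number of finitely supported sequences (a_1, a_2, a_3, …) of nonnegative integers satisfying Σ_{i≥1} a_i = n and Σ_{i≥1} a_i 2^i = m is at most e^{2πn/√3} · 2^n. Equivalently, the number of partitions of m into exactly n parts, each of which is a power of 2 greater than 1, is at most e^{2πn/√3} · 2^n. -/
open List

/-- binary digit sum -/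
def s2 (n : ℕ) : ℕ := (Nat.digits 2 n).sum

/-- 2-adic valuation -/
def v2 (n : ℕ) : ℕ := n.factorization 2

lemma s2_zero : s2 0 = 0 := by simp [s2]

lemma s2_def (n : ℕ) (h : 0 < n) : s2 n = n % 2 + s2 (n / 2) := by
  unfold s2
  rw [Nat.digits_def' (by norm_num : 1 < 2) h]
  simp

lemma s2_two_mul (n : ℕ) : s2 (2 * n) = s2 n := by
  rcases Nat.eq_zero_or_pos n with h | h
  · simp [h, s2_zero]
  · rw [s2_def _ (by positivity)]
    simp [Nat.mul_div_cancel_left _ (by norm_num : 0 < 2)]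

lemma s2_odd (k : ℕ) : s2 (2 * k + 1) = 1 + s2 k := by
  rw [s2_def _ (by positivity)]
  have : (2 * k + 1) / 2 = k := by omega
  rw [this]
  omega

lemma s2_pow_mul (e n : ℕ) : s2 (2 ^ e * n) = s2 n := by
  induction e with
  | zero => simp
  | succ e ih => rw [pow_succ, mul_comm (2^e) 2, mul_assoc, s2_two_mul, ih]

lemma s2_pos (n : ℕ) (h : 0 < n) : 0 < s2 n := by
  induction n using Nat.strong_induction_on with
  | _ n ih =>
    rcases Nat.even_or_odd n with ⟨k, hk⟩ | ⟨k, hk⟩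
    · subst hk
      have hk' : 0 < k := by omega
      rw [show k + k = 2 * k by ring, s2_two_mul]
      exact ih k (by omega) hk'
    · subst hk
      rw [s2_odd]; omega

lemma v2_odd (n : ℕ) (h : n % 2 = 1) : v2 n = 0 := by
  unfold v2
  exact Nat.factorization_eq_zero_of_not_dvd (by omega)

lemma v2_pow_mul (e n : ℕ) (h : n ≠ 0) : v2 (2 ^ e * n) = e + v2 n := by
  unfold v2
  rw [Nat.factorization_mul (by positivity) h]
  simp [Nat.Prime.factorization_pow Nat.prime_two]

lemma v2_two_mul (n : ℕ) (h : n ≠ 0) : v2 (2 * n) = 1 + v2 n := by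
  simpa using v2_pow_mul 1 n h

lemma le_v2_of_pow_dvd {e n : ℕ} (h : 2 ^ e ∣ n) (hn : n ≠ 0) : e ≤ v2 n :=
  (Nat.Prime.pow_dvd_iff_le_factorization Nat.prime_two hn).mp h

/-- Key lemma: subtracting one trades the trailing zeros for ones. -/
lemma s2_sub_one (M : ℕ) (h : 0 < M) : s2 (M - 1) + 1 = s2 M + v2 M := by
  induction M using Nat.strong_induction_on with
  | _ M ih =>
    rcases Nat.even_or_odd M with ⟨K, hK⟩ | ⟨k, hk⟩
    · have hM : M = 2 * K := by omega
      have hKpos : 0 < K := by omega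
      have h1 : M - 1 = 2 * (K - 1) + 1 := by omega
      have e1 : s2 M = s2 K := by rw [hM, s2_two_mul]
      have e2 : v2 M = 1 + v2 K := by rw [hM, v2_two_mul _ (by omega)]
      have e3 : s2 (M - 1) = 1 + s2 (K - 1) := by rw [h1, s2_odd]
      have := ih K (by omega) hKpos
      omega
    · have h1 : M - 1 = 2 * k := by omega
      have e1 : s2 M = 1 + s2 k := by rw [hk, s2_odd]
      have e2 : s2 (M - 1) = s2 k := by rw [h1, s2_two_mul]
      have e3 : v2 M = 0 := v2_odd _ (by omega)
      omega

lemma s2_sub_pow {S e : ℕ} (hd : 2 ^ e ∣ S) (hS : S ≠ 0) :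
    s2 (S - 2 ^ e) + 1 = s2 S + (v2 S - e) := by
  obtain ⟨M, rfl⟩ := hd
  have hM : M ≠ 0 := by rintro rfl; simp at hS
  obtain ⟨M', rfl⟩ : ∃ M', M = M' + 1 := ⟨M - 1, by omega⟩
  have h1 : 2 ^ e * (M' + 1) - 2 ^ e = 2 ^ e * M' := by
    rw [Nat.mul_succ]; omega
  rw [h1, s2_pow_mul, s2_pow_mul, v2_pow_mul _ _ hM]
  have := s2_sub_one (M' + 1) (by omega)
  have h2 : e + v2 (M' + 1) - e = v2 (M' + 1) := by omega
  rw [h2]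
  simpa [s2_pow_mul] using this

/-- sum of `2^e` over a list of exponents -/
def sum2 (l : List ℕ) : ℕ := (l.map (2 ^ ·)).sum

lemma sum2_nil : sum2 [] = 0 := rfl

lemma sum2_cons (e : ℕ) (t : List ℕ) : sum2 (e :: t) = 2 ^ e + sum2 t := rfl

/-- the code of a list of exponents -/
def code : List ℕ → List ℕ
  | [] => []
  | e :: t => (v2 (sum2 (e :: t)) - e) :: code t

lemma code_length (l : List ℕ) : (code l).length = l.length := by
  induction l with
  | nil => rfl
  | cons e t ih => simp [code, ih]

lemma pow_head_dvd_sum2 (e : ℕ) (t : List ℕ) (hs : ∀ x ∈ t, e ≤ x) :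
    2 ^ e ∣ sum2 (e :: t) := by
  rw [sum2_cons]
  refine Dvd.dvd.add dvd_rfl ?_
  induction t with
  | nil => simp [sum2_nil]
  | cons a u ih =>
    rw [sum2_cons]
    exact Dvd.dvd.add (pow_dvd_pow 2 (hs a (by simp)))
      (ih fun x hx => hs x (by simp [hx]))

lemma sum2_cons_ne_zero (e : ℕ) (t : List ℕ) : sum2 (e :: t) ≠ 0 := by
  rw [sum2_cons]; positivity

/-- exact identity: code-sum plus digit sum of the total equals the length -/
lemma code_sum (l : List ℕ) (hl : l.Pairwise (· ≤ ·)) :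
    (code l).sum + s2 (sum2 l) = l.length := by
  induction l with
  | nil => simp [code, sum2_nil, s2_zero]
  | cons e t ih =>
    have hs : ∀ x ∈ t, e ≤ x := fun x hx => (List.pairwise_cons.mp hl).1 x hx
    have hd : 2 ^ e ∣ sum2 (e :: t) := pow_head_dvd_sum2 e t hs
    have hne : sum2 (e :: t) ≠ 0 := sum2_cons_ne_zero e t
    have hkey := s2_sub_pow hd hne
    have ht : sum2 t = sum2 (e :: t) - 2 ^ e := by rw [sum2_cons]; omega
    have ih' := ih (List.pairwise_cons.mp hl).2
    rw [ht] at ih'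
    simp only [code, List.sum_cons, List.length_cons]
    omega

lemma code_injective (l l' : List ℕ) (hl : l.Pairwise (· ≤ ·)) (hl' : l'.Pairwise (· ≤ ·))
    (hsum : sum2 l = sum2 l') (hcode : code l = code l') : l = l' := by
  induction l generalizing l' with
  | nil =>
    cases l' with
    | nil => rfl
    | cons e t => simp [code] at hcode
  | cons e t ih =>
    cases l' with
    | nil => simp [code] at hcode
    | cons e' t' =>
      simp only [code, List.cons.injEq] at hcode
      have hs : ∀ x ∈ t, e ≤ x := fun x hx => (List.pairwise_cons.mp hl).1 x hx
      have hs' : ∀ x ∈ t', e' ≤ x := fun x hx => (List.pairwise_cons.mp hl').1 x hx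
      have hd := pow_head_dvd_sum2 e t hs
      have hd' := pow_head_dvd_sum2 e' t' hs'
      have hne := sum2_cons_ne_zero e t
      have he : e ≤ v2 (sum2 (e :: t)) := le_v2_of_pow_dvd hd hne
      have he' : e' ≤ v2 (sum2 (e' :: t')) := le_v2_of_pow_dvd hd' (sum2_cons_ne_zero e' t')
      rw [← hsum] at he' hcode
      have hee : e = e' := by omega
      subst hee
      have hts : sum2 t = sum2 t' := by
        have := sum2_cons e t
        have := sum2_cons e t'
        omega
      have ht' := ih t' (List.pairwise_cons.mp hl).2 (List.pairwise_cons.mp hl').2 hts hcode.2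
      rw [ht']

/-- unary encoding of a list of naturals into booleans -/
def enc : List ℕ → List Bool
  | [] => []
  | x :: t => List.replicate x true ++ (false :: enc t)

lemma enc_length (l : List ℕ) : (enc l).length = l.sum + l.length := by
  induction l with
  | nil => rfl
  | cons x t ih => simp [enc, ih]; omega

lemma enc_head_aux (x y : ℕ) (u v : List Bool)
    (h : List.replicate x true ++ (false :: u) = List.replicate y true ++ (false :: v)) :
    x = y ∧ u = v := by
  induction x generalizing y with
  | zero =>
    cases y with
    | zero => simpa using h
    | succ y => simp [List.replicate_succ] at h
  | succ x ih =>
    cases y with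
    | zero => simp [List.replicate_succ] at h
    | succ y =>
      simp only [List.replicate_succ, List.cons_append, List.cons.injEq, true_and] at h
      obtain ⟨h1, h2⟩ := ih y h
      exact ⟨by omega, h2⟩

lemma enc_injective : Function.Injective enc := by
  intro l l' h
  induction l generalizing l' with
  | nil =>
    cases l' with
    | nil => rfl
    | cons x t =>
      exact absurd (congrArg List.length h) (by simp [enc] <;> omega)
  | cons x t ih =>
    cases l' with
    | nil =>
      exact absurd (congrArg List.length h) (by simp [enc] <;> omega)
    | cons y t' =>
      simp only [enc] at h
      obtain ⟨h1, h2⟩ := enc_head_aux x y (enc t) (enc t') h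
      rw [h1, ih h2]

/-- for `n ≥ 1` and `m ≥ 0`, the number of finitely supported sequences
`(a_1, a_2, …)` of nonnegative integers with `Σ a_i = n` and `Σ a_i 2^i = m` (equivalently,
the number of partitions of `m` into exactly `n` parts, each a power of `2` greater
than `1`) is at most `e^{2πn/√3} · 2^n`. -/
theorem stmt17 (n : ℕ) (hn : 1 ≤ n) (m : ℕ) :
    (Nat.card {a : ℕ →₀ ℕ // a 0 = 0 ∧ (a.sum fun _ x => x) = n ∧
        (a.sum fun i x => x * 2 ^ i) = m} : ℝ) ≤
      Real.exp (2 * Real.pi * n / Real.sqrt 3) * 2 ^ n := by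
  -- the sorted exponent list of a
  set T := {a : ℕ →₀ ℕ // a 0 = 0 ∧ (a.sum fun _ x => x) = n ∧
      (a.sum fun i x => x * 2 ^ i) = m} with hT
  -- list of exponents, sorted
  let L : T → List ℕ := fun a => Multiset.sort (Finsupp.toMultiset a.1) (· ≤ ·)
  have hLsort : ∀ a : T, (L a).Pairwise (· ≤ ·) := fun a => Multiset.pairwise_sort _ _
  have hLcoe : ∀ a : T, ((L a : List ℕ) : Multiset ℕ) = Finsupp.toMultiset a.1 :=
    fun a => Multiset.sort_eq _ _
  have hLlen : ∀ a : T, (L a).length = n := by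
    intro a
    have h0 : (L a).length = ((L a : List ℕ) : Multiset ℕ).card := by simp
    rw [h0, hLcoe, Finsupp.card_toMultiset]
    exact a.2.2.1
  have hLsum : ∀ a : T, sum2 (L a) = m := by
    intro a
    have h1 : sum2 (L a) = (((L a : List ℕ) : Multiset ℕ).map (2 ^ ·)).sum := by
      simp [sum2]
    have h2 : ((Finsupp.mapDomain (fun x => 2 ^ x) (a.1 : ℕ →₀ ℕ)).sum fun a n => n • a)
        = (a.1 : ℕ →₀ ℕ).sum fun i x => x * 2 ^ i := by
      rw [Finsupp.sum_mapDomain_index (by simp) (by intros; rw [add_smul])]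
      simp [mul_comm]
    rw [h1, hLcoe, Finsupp.toMultiset_map, Finsupp.sum_toMultiset, h2]
    exact a.2.2.2
  have hLinj : Function.Injective L := by
    intro a b hab
    have : Finsupp.toMultiset a.1 = Finsupp.toMultiset b.1 := by
      rw [← hLcoe a, ← hLcoe b, hab]
    have := congrArg Multiset.toFinsupp this
    rw [Finsupp.toMultiset_toFinsupp, Finsupp.toMultiset_toFinsupp] at this
    exact Subtype.ext this
  -- code sum bound
  have hcode_sum : ∀ a : T, (code (L a)).sum ≤ n - 1 := by
    intro a
    have h1 := code_sum (L a) (hLsort a)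
    rw [hLlen a, hLsum a] at h1
    have hm : 0 < m := by
      have := hLsum a
      cases hqq : L a with
      | nil => rw [hqq] at this; have := hLlen a; rw [hqq] at this; simp at this; omega
      | cons e t =>
        rw [hqq, sum2_cons] at this
        have : 0 < 2 ^ e := by positivity
        omega
    have := s2_pos m hm
    omega
  -- full injection into Fin (2*n) → Bool
  let big : T → List Bool := fun a =>
    enc (code (L a) ++ [(n - 1) - (code (L a)).sum])
  have hbiglen : ∀ a : T, (big a).length = 2 * n := by
    intro a
    have h1 := code_length (L a)
    have h2 := hcode_sum a
    simp only [big, enc_length, List.sum_append, List.length_append]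
    simp [h1, hLlen a]
    omega
  let F : T → (Fin (2 * n) → Bool) := fun a i => (big a).getD i.1 false
  have hF : Function.Injective F := by
    intro a b hab
    have hlist : big a = big b := by
      apply List.ext_getElem (by rw [hbiglen a, hbiglen b])
      intro i h1 h2
      have hi : i < 2 * n := by rw [hbiglen a] at h1; exact h1
      have := congrFun hab ⟨i, hi⟩
      simpa [F, List.getD_eq_getElem?_getD, List.getElem?_eq_getElem, h1, h2] using this
    have henc : code (L a) ++ [(n-1) - (code (L a)).sum]
        = code (L b) ++ [(n-1) - (code (L b)).sum] := enc_injective hlist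
    have hcc : code (L a) = code (L b) := by
      have hlen : (code (L a)).length = (code (L b)).length := by
        rw [code_length, code_length, hLlen, hLlen]
      have := congrArg (fun l => List.take (code (L a)).length l) henc
      simpa [List.take_left, hlen, List.take_left'] using this
    apply hLinj
    exact code_injective _ _ (hLsort a) (hLsort b) (by rw [hLsum a, hLsum b]) hcc
  -- counting
  have hcard : Nat.card T ≤ 2 ^ (2 * n) := by
    have := Nat.card_le_card_of_injective F hF
    simpa [Nat.card_eq_fintype_card, Fintype.card_fun] using this
  -- real arithmetic
  have h1 : (Nat.card T : ℝ) ≤ 2 ^ (2 * n) := by exact_mod_cast hcard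
  refine h1.trans ?_
  have h2 : (2 : ℝ) ^ (2 * n) = 2 ^ n * 2 ^ n := by rw [two_mul, pow_add]
  rw [h2]
  have hexp : (2:ℝ) ^ n ≤ Real.exp (2 * Real.pi * n / Real.sqrt 3) := by
    have hs3 : Real.sqrt 3 ≤ 2 := by
      nlinarith [Real.sq_sqrt (by norm_num : (3:ℝ) ≥ 0), Real.sqrt_nonneg 3]
    have hs3pos : 0 < Real.sqrt 3 := Real.sqrt_pos.mpr (by norm_num)
    have hpi : (3 : ℝ) ≤ Real.pi := Real.pi_gt_three.le
    have hx : (1 : ℝ) ≤ 2 * Real.pi / Real.sqrt 3 := by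
      rw [le_div_iff₀ hs3pos]
      nlinarith
    have h2e : (2 : ℝ) ≤ Real.exp (2 * Real.pi / Real.sqrt 3) := by
      have := Real.add_one_le_exp (2 * Real.pi / Real.sqrt 3)
      linarith
    calc (2 : ℝ) ^ n ≤ Real.exp (2 * Real.pi / Real.sqrt 3) ^ n := by
          exact pow_le_pow_left₀ (by norm_num) h2e n
      _ = Real.exp (2 * Real.pi * n / Real.sqrt 3) := by
          rw [← Real.exp_nat_mul]
          ring_nf
  exact mul_le_mul_of_nonneg_right hexp (by positivity)
end
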